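/- arXiv:1412.0728 — 5 statements merged into one kernel-verified Lean document; each statement's English description precedes it below -/
import Mathlib

section
/- Let r = (r_1, ..., r_m) be a sequence of positive reals and h, p, q positive integers. If m = 2^(Σ_{k=0}^{p-1} h^k + Σ_{k=0}^{q-1} h^k), then there exists a strictly increasing sequence of indices 0 ≤ i_0 < i_1 < ... < i_t ≤ m with t ≥ p such that the sums s_τ = Σ_{k=i_{τ-1}+1}^{i_τ} r_k satisfy h·s_τ ≤ s_{τ+1} for all τ (an h-increasing sum-subsequence of length p), or there exists such a sequence with t ≥ q and s_τ ≥ h·s_{τ+1} for all τ (an h-decreasing sum-subsequence of length q). -/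
open Finset


private lemma tmlp : ∀ h : ℕ, 2 * h ≤ 2 ^ h := by
  intro h
  induction h with
  | zero => simp
  | succ n ih =>
    rcases Nat.eq_zero_or_pos n with rfl | hn
    · norm_num
    · have h2 : 2 ≤ 2 ^ n := by
        calc 2 = 2 ^ 1 := by norm_num
        _ ≤ 2 ^ n := Nat.pow_le_pow_right (by norm_num) hn
      calc 2 * (n + 1) = 2 * n + 2 := by ring
      _ ≤ 2 ^ n + 2 ^ n := by omega
      _ = 2 ^ (n + 1) := by rw [pow_succ]; ring

private lemma bern (h : ℕ) (hh : 0 < h) : 2 * (h : ℝ) ^ h ≤ ((h : ℝ) + 1) ^ h := by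
  have hhp : (0 : ℝ) < h := by exact_mod_cast hh
  have h1 : (1 : ℝ) + h * (1 / h) ≤ (1 + 1 / h) ^ h := by
    apply one_add_mul_le_pow
    have : (0:ℝ) ≤ 1 / h := by positivity
    linarith
  have h2 : (1 : ℝ) + h * (1 / h) = 2 := by field_simp; norm_num
  have h3 : ((1 : ℝ) + 1 / h) ^ h * (h : ℝ) ^ h = ((h : ℝ) + 1) ^ h := by
    rw [← mul_pow]; congr 1; field_simp
  calc 2 * (h : ℝ) ^ h = ((1 : ℝ) + h * (1 / h)) * (h : ℝ) ^ h := by rw [h2]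
  _ ≤ ((1 : ℝ) + 1 / h) ^ h * (h : ℝ) ^ h :=
      mul_le_mul_of_nonneg_right h1 (pow_nonneg (le_of_lt hhp) h)
  _ = ((h : ℝ) + 1) ^ h := h3

private lemma geom (c : ℝ) (hc : 0 ≤ c) (T : ℕ → ℝ) :
    ∀ n : ℕ, 0 < n → (∀ j, j < n → (c + 1) * T (j + 1) < c * T j) →
    (c + 1) ^ n * T n < c ^ n * T 0 := by
  intro n
  induction n with
  | zero => omega
  | succ n IHn =>
    intro _ hrec
    rcases Nat.eq_zero_or_pos n with rfl | hn
    · simpa using hrec 0 (by omega)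
    · have h1 := IHn hn (fun j hj => hrec j (by omega))
      have h2 := hrec n (by omega)
      calc (c + 1) ^ (n + 1) * T (n + 1) = (c + 1) ^ n * ((c + 1) * T (n + 1)) := by ring
      _ < (c + 1) ^ n * (c * T n) :=
          mul_lt_mul_of_pos_left h2 (pow_pos (by linarith) n)
      _ = c * ((c + 1) ^ n * T n) := by ring
      _ ≤ c * (c ^ n * T 0) := mul_le_mul_of_nonneg_left (le_of_lt h1) hc
      _ = c ^ (n + 1) * T 0 := by ring

private lemma chain (P : ℕ) (i : ℕ → ℕ) (hi : ∀ τ, τ < P → i τ < i (τ + 1)) :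
    ∀ τ, τ ≤ P → ∀ σ, σ ≤ τ → i σ ≤ i τ := by
  intro τ
  induction τ with
  | zero => intro _ σ hσ; interval_cases σ; exact le_rfl
  | succ τ ih =>
    intro hτ σ hσ
    rcases Nat.lt_or_ge σ (τ + 1) with hσ' | hσ'
    · exact le_trans (ih (by omega) σ (by omega)) (le_of_lt (hi τ (by omega)))
    · have : σ = τ + 1 := by omega
      subst this; exact le_rfl

private lemma snn (r : ℕ → ℝ) {a m : ℕ} (hr : ∀ k, a < k → k ≤ a + m → 0 < r k)
    {x y : ℕ} (hx : a ≤ x) (hy : y ≤ a + m) : 0 ≤ ∑ k ∈ Ioc x y, r k :=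
  Finset.sum_nonneg fun k hk =>
    le_of_lt (hr k (lt_of_le_of_lt hx (mem_Ioc.1 hk).1) (le_trans (mem_Ioc.1 hk).2 hy))

private lemma smono (r : ℕ → ℝ) {a m : ℕ} (hr : ∀ k, a < k → k ≤ a + m → 0 < r k)
    {u x y v : ℕ} (hu : a ≤ u) (hx : u ≤ x) (hy : y ≤ v) (hv : v ≤ a + m) :
    ∑ k ∈ Ioc x y, r k ≤ ∑ k ∈ Ioc u v, r k :=
  Finset.sum_le_sum_of_subset_of_nonneg (Ioc_subset_Ioc hx hy) fun k hk _ =>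
    le_of_lt (hr k (lt_of_le_of_lt hu (mem_Ioc.1 hk).1) (le_trans (mem_Ioc.1 hk).2 hv))

private lemma key (h : ℕ) (hh : 0 < h) (r : ℕ → ℝ) :
    ∀ n p q a m : ℕ, p + q ≤ n → 0 < p → 0 < q →
    (∀ k, a < k → k ≤ a + m → 0 < r k) →
    m = 2 ^ ((∑ k ∈ range p, h ^ k) + ∑ k ∈ range q, h ^ k) →
    (∃ i : ℕ → ℕ, (∀ τ, τ < p → i τ < i (τ + 1)) ∧ a ≤ i 0 ∧ i p ≤ a + m ∧
      ∀ τ, τ + 1 < p → (h : ℝ) * ∑ k ∈ Ioc (i τ) (i (τ + 1)), r k ≤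
          ∑ k ∈ Ioc (i (τ + 1)) (i (τ + 2)), r k) ∨
    (∃ i : ℕ → ℕ, (∀ τ, τ < q → i τ < i (τ + 1)) ∧ a ≤ i 0 ∧ i q ≤ a + m ∧
      ∀ τ, τ + 1 < q → (h : ℝ) * ∑ k ∈ Ioc (i (τ + 1)) (i (τ + 2)), r k ≤
          ∑ k ∈ Ioc (i τ) (i (τ + 1)), r k) := by
  intro n
  induction n with
  | zero => intro p q a m hn hp hq _ _; omega
  | succ n IH =>
    intro p q a m hn hp hq hr hm
    have hm1le : 1 ≤ m := by rw [hm]; exact Nat.one_le_two_pow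
    -- base case p = 1
    rcases Nat.lt_or_ge p 2 with hp2 | hp2
    · refine Or.inl ⟨fun τ => a + min τ 1, ?_, by simp, ?_, ?_⟩
      · intro τ hτ
        have : τ = 0 := by omega
        subst this; simp
      · have : p = 1 := by omega
        rw [this]; simp; omega
      · intro τ hτ; omega
    rcases Nat.lt_or_ge q 2 with hq2 | hq2
    · refine Or.inr ⟨fun τ => a + min τ 1, ?_, by simp, ?_, ?_⟩
      · intro τ hτ
        have : τ = 0 := by omega
        subst this; simp
      · have : q = 1 := by omega
        rw [this]; simp; omega
      · intro τ hτ; omega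
    -- main case : p, q ≥ 2
    obtain ⟨P, rfl⟩ : ∃ P, p = P + 1 := ⟨p - 1, by omega⟩
    obtain ⟨Q, rfl⟩ : ∃ Q, q = Q + 1 := ⟨q - 1, by omega⟩
    have hP : 1 ≤ P := by omega
    have hQ : 1 ≤ Q := by omega
    set L1 : ℕ := 2 ^ ((∑ k ∈ range P, h ^ k) + ∑ k ∈ range (Q + 1), h ^ k) with hL1def
    set L2 : ℕ := 2 ^ ((∑ k ∈ range (P + 1), h ^ k) + ∑ k ∈ range Q, h ^ k) with hL2def
    have hL1pos : 0 < L1 := by positivity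
    have hL2pos : 0 < L2 := by positivity
    have hm1 : m = L1 * 2 ^ (h ^ P) := by
      rw [hm, hL1def, ← pow_add]
      congr 1
      rw [Finset.sum_range_succ _ P]
      ring
    have hm2 : m = L2 * 2 ^ (h ^ Q) := by
      rw [hm, hL2def, ← pow_add]
      congr 1
      rw [Finset.sum_range_succ _ Q]
      ring
    have hexp1 : 2 * h ≤ 2 ^ (h ^ P) :=
      le_trans (tmlp h) (Nat.pow_le_pow_right (by norm_num) (Nat.le_self_pow (by omega) h))
    have hexp2 : 2 * h ≤ 2 ^ (h ^ Q) :=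
      le_trans (tmlp h) (Nat.pow_le_pow_right (by norm_num) (Nat.le_self_pow (by omega) h))
    have hhL1 : 2 * (h * L1) ≤ m := by
      calc 2 * (h * L1) = (2 * h) * L1 := by ring
      _ ≤ 2 ^ (h ^ P) * L1 := Nat.mul_le_mul_right _ hexp1
      _ = m := by rw [hm1]; ring
    have hhL2 : 2 * (h * L2) ≤ m := by
      calc 2 * (h * L2) = (2 * h) * L2 := by ring
      _ ≤ 2 ^ (h ^ Q) * L2 := Nat.mul_le_mul_right _ hexp2
      _ = m := by rw [hm2]; ring
    have hLpos1 : 1 ≤ h * L1 := Nat.one_le_iff_ne_zero.2 (by positivity)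
    have hLpos2 : 1 ≤ h * L2 := Nat.one_le_iff_ne_zero.2 (by positivity)
    by_cases hc1 : ∃ j, 1 ≤ j ∧ j ≤ h ∧
        (h : ℝ) * (∑ k ∈ Ioc (a + (j - 1) * L1) (a + j * L1), r k) ≤
          ∑ k ∈ Ioc (a + j * L1) (a + m), r k
    · obtain ⟨j, hj1, hjh, hjs⟩ := hc1
      have hjL : j * L1 ≤ h * L1 := Nat.mul_le_mul_right _ hjh
      have hjL' : (j - 1) * L1 + L1 = j * L1 := by
        have hj : j - 1 + 1 = j := by omega
        calc (j - 1) * L1 + L1 = (j - 1 + 1) * L1 := by ring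
        _ = j * L1 := by rw [hj]
      have hrsub : ∀ k, a + (j - 1) * L1 < k → k ≤ a + (j - 1) * L1 + L1 → 0 < r k := by
        intro k hk1 hk2
        exact hr k (by omega) (by omega)
      rcases IH P (Q + 1) (a + (j - 1) * L1) L1 (by omega) (by omega) (by omega) hrsub hL1def
        with ⟨i, hinc, hi0, hiP, hcond⟩ | ⟨i, hinc, hi0, hiQ, hcond⟩
      · -- extend the increasing (length P) sequence by the tail block
        have hmono := chain P i hinc
        refine Or.inl ⟨fun τ => if τ ≤ P then i τ else a + m, ?_, ?_, ?_, ?_⟩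
        · intro τ hτ
          dsimp only
          by_cases hτP : τ < P
          · rw [if_pos (by omega), if_pos (by omega)]
            exact hinc τ hτP
          · have hτ' : τ = P := by omega
            subst hτ'
            rw [if_pos le_rfl, if_neg (by omega)]
            omega
        · dsimp only; rw [if_pos (Nat.zero_le P)]; omega
        · dsimp only; rw [if_neg (by omega)]
        · intro τ hτ1
          dsimp only
          by_cases hlast : τ + 2 ≤ P
          · rw [if_pos (by omega), if_pos (by omega), if_pos (by omega)]
            exact hcond τ (by omega)
          · have hτ : P = τ + 1 := by omega
            subst hτ
            rw [if_pos (by omega), if_pos (by omega), if_neg (by omega)]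
            have hi0τ : i 0 ≤ i τ := hmono τ (by omega) 0 (Nat.zero_le τ)
            have hi0τ1 : i 0 ≤ i (τ + 1) := hmono (τ + 1) le_rfl 0 (Nat.zero_le _)
            have hb1 : ∑ k ∈ Ioc (i τ) (i (τ + 1)), r k ≤
                ∑ k ∈ Ioc (a + (j - 1) * L1) (a + j * L1), r k :=
              smono r hr (by omega) (by omega) (by omega) (by omega)
            have hb2 : ∑ k ∈ Ioc (a + j * L1) (a + m), r k ≤
                ∑ k ∈ Ioc (i (τ + 1)) (a + m), r k :=
              smono r hr (by omega) (by omega) le_rfl le_rfl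
            calc (h : ℝ) * ∑ k ∈ Ioc (i τ) (i (τ + 1)), r k
                ≤ (h : ℝ) * ∑ k ∈ Ioc (a + (j - 1) * L1) (a + j * L1), r k :=
                  mul_le_mul_of_nonneg_left hb1 (by positivity)
            _ ≤ ∑ k ∈ Ioc (a + j * L1) (a + m), r k := hjs
            _ ≤ ∑ k ∈ Ioc (i (τ + 1)) (a + m), r k := hb2
      · -- a decreasing sequence of length Q+1 = q found inside: done
        exact Or.inr ⟨i, hinc, by omega, by omega, hcond⟩
    · by_cases hc2 : ∃ j, 1 ≤ j ∧ j ≤ h ∧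
          (h : ℝ) * (∑ k ∈ Ioc (a + (m - j * L2)) (a + (m - (j - 1) * L2)), r k) ≤
            ∑ k ∈ Ioc a (a + (m - j * L2)), r k
      · obtain ⟨j, hj1, hjh, hjs⟩ := hc2
        have hjL : j * L2 ≤ h * L2 := Nat.mul_le_mul_right _ hjh
        have hjL' : (j - 1) * L2 + L2 = j * L2 := by
          have hj : j - 1 + 1 = j := by omega
          calc (j - 1) * L2 + L2 = (j - 1 + 1) * L2 := by ring
          _ = j * L2 := by rw [hj]
        have ha' : a + (m - j * L2) + L2 = a + (m - (j - 1) * L2) := by omega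
        have hrsub : ∀ k, a + (m - j * L2) < k → k ≤ a + (m - j * L2) + L2 → 0 < r k := by
          intro k hk1 hk2
          exact hr k (by omega) (by omega)
        rcases IH (P + 1) Q (a + (m - j * L2)) L2 (by omega) (by omega) (by omega) hrsub hL2def
          with ⟨i, hinc, hi0, hiP, hcond⟩ | ⟨i, hinc, hi0, hiQ, hcond⟩
        · exact Or.inl ⟨i, hinc, by omega, by omega, hcond⟩
        · have hmono := chain Q i hinc
          have hi0Q : i 0 ≤ i Q := hmono Q le_rfl 0 (Nat.zero_le _)
          have hi1Q : i 1 ≤ i Q := hmono Q le_rfl 1 hQ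
          refine Or.inr ⟨fun τ => if τ = 0 then a else i (τ - 1), ?_, ?_, ?_, ?_⟩
          · intro τ hτ
            dsimp only
            rcases Nat.eq_zero_or_pos τ with rfl | hτ0
            · rw [if_pos rfl, if_neg (by omega)]
              simp only [Nat.add_sub_cancel]
              omega
            · rw [if_neg (by omega), if_neg (by omega)]
              have e1 : τ + 1 - 1 = (τ - 1) + 1 := by omega
              rw [e1]
              exact hinc (τ - 1) (by omega)
          · dsimp only; rw [if_pos rfl]
          · dsimp only
            rw [if_neg (by omega)]
            have e2 : Q + 1 - 1 = Q := by omega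
            rw [e2]; omega
          · intro τ hτ1
            dsimp only
            rcases Nat.eq_zero_or_pos τ with rfl | hτ0
            · rw [if_neg (by omega), if_neg (by omega), if_pos rfl]
              simp only [show (0 : ℕ) + 1 + 1 - 1 = 1 from rfl, show (0 : ℕ) + 1 - 1 = 0 from rfl,
                show (0 : ℕ) + 2 - 1 = 1 from rfl]
              have hb1 : ∑ k ∈ Ioc (i 0) (i 1), r k ≤
                  ∑ k ∈ Ioc (a + (m - j * L2)) (a + (m - (j - 1) * L2)), r k :=
                smono r hr (by omega) (by omega) (by omega) (by omega)
              have hb2 : ∑ k ∈ Ioc a (a + (m - j * L2)), r k ≤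
                  ∑ k ∈ Ioc a (i 0), r k :=
                smono r hr le_rfl le_rfl (by omega) (by omega)
              calc (h : ℝ) * ∑ k ∈ Ioc (i 0) (i 1), r k
                  ≤ (h : ℝ) * ∑ k ∈ Ioc (a + (m - j * L2)) (a + (m - (j - 1) * L2)), r k :=
                    mul_le_mul_of_nonneg_left hb1 (by positivity)
              _ ≤ ∑ k ∈ Ioc a (a + (m - j * L2)), r k := hjs
              _ ≤ ∑ k ∈ Ioc a (i 0), r k := hb2
            · rw [if_neg (by omega), if_neg (by omega), if_neg (by omega)]
              have e1 : τ + 1 - 1 = (τ - 1) + 1 := by omega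
              have e2 : τ + 2 - 1 = (τ - 1) + 2 := by omega
              rw [e1, e2]
              exact hcond (τ - 1) (by omega)
      · exfalso
        push_neg at hc1 hc2
        have hTrec : ∀ j, j < h → ((h : ℝ) + 1) * (∑ k ∈ Ioc (a + (j + 1) * L1) (a + m), r k) <
            (h : ℝ) * ∑ k ∈ Ioc (a + j * L1) (a + m), r k := by
          intro j hj
          have hx := hc1 (j + 1) (by omega) (by omega)
          simp only [Nat.add_sub_cancel] at hx
          have hjj : (j + 1) * L1 = j * L1 + L1 := by ring
          have hjj2 : (j + 1) * L1 ≤ h * L1 := Nat.mul_le_mul_right _ (by omega)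
          have hsplit : (∑ k ∈ Ioc (a + j * L1) (a + (j + 1) * L1), r k) +
              (∑ k ∈ Ioc (a + (j + 1) * L1) (a + m), r k) =
              ∑ k ∈ Ioc (a + j * L1) (a + m), r k :=
            Finset.sum_Ioc_consecutive r (by omega) (by omega)
          rw [add_mul, one_mul, ← hsplit, mul_add]
          linarith
        have hVrec : ∀ j, j < h → ((h : ℝ) + 1) * (∑ k ∈ Ioc a (a + (m - (j + 1) * L2)), r k) <
            (h : ℝ) * ∑ k ∈ Ioc a (a + (m - j * L2)), r k := by
          intro j hj
          have hx := hc2 (j + 1) (by omega) (by omega)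
          simp only [Nat.add_sub_cancel] at hx
          have hjj : (j + 1) * L2 = j * L2 + L2 := by ring
          have hjj2 : (j + 1) * L2 ≤ h * L2 := Nat.mul_le_mul_right _ (by omega)
          have hsplit : (∑ k ∈ Ioc a (a + (m - (j + 1) * L2)), r k) +
              (∑ k ∈ Ioc (a + (m - (j + 1) * L2)) (a + (m - j * L2)), r k) =
              ∑ k ∈ Ioc a (a + (m - j * L2)), r k :=
            Finset.sum_Ioc_consecutive r (by omega) (by omega)
          rw [add_mul, one_mul, ← hsplit, mul_add]
          linarith
        have hG1 : ((h : ℝ) + 1) ^ h * (∑ k ∈ Ioc (a + h * L1) (a + m), r k) <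
            (h : ℝ) ^ h * ∑ k ∈ Ioc a (a + m), r k := by
          have := geom (h : ℝ) (by positivity)
            (fun j => ∑ k ∈ Ioc (a + j * L1) (a + m), r k) h hh hTrec
          simpa using this
        have hG2 : ((h : ℝ) + 1) ^ h * (∑ k ∈ Ioc a (a + (m - h * L2)), r k) <
            (h : ℝ) ^ h * ∑ k ∈ Ioc a (a + m), r k := by
          have := geom (h : ℝ) (by positivity)
            (fun j => ∑ k ∈ Ioc a (a + (m - j * L2)), r k) h hh hVrec
          simpa using this
        have hS0 : 0 ≤ ∑ k ∈ Ioc a (a + m), r k := snn r hr le_rfl le_rfl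
        have hpow : (0 : ℝ) < ((h : ℝ) + 1) ^ h := by positivity
        have hbern := bern h hh
        have hTh : 2 * (∑ k ∈ Ioc (a + h * L1) (a + m), r k) < ∑ k ∈ Ioc a (a + m), r k := by
          have h1 : ((h : ℝ) + 1) ^ h * (2 * ∑ k ∈ Ioc (a + h * L1) (a + m), r k) <
              ((h : ℝ) + 1) ^ h * ∑ k ∈ Ioc a (a + m), r k := by
            calc ((h : ℝ) + 1) ^ h * (2 * ∑ k ∈ Ioc (a + h * L1) (a + m), r k)
                = 2 * (((h : ℝ) + 1) ^ h * ∑ k ∈ Ioc (a + h * L1) (a + m), r k) := by ring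
            _ < 2 * ((h : ℝ) ^ h * ∑ k ∈ Ioc a (a + m), r k) := by linarith
            _ = (2 * (h : ℝ) ^ h) * ∑ k ∈ Ioc a (a + m), r k := by ring
            _ ≤ ((h : ℝ) + 1) ^ h * ∑ k ∈ Ioc a (a + m), r k :=
                mul_le_mul_of_nonneg_right hbern hS0
          exact lt_of_mul_lt_mul_left h1 (le_of_lt hpow)
        have hVh : 2 * (∑ k ∈ Ioc a (a + (m - h * L2)), r k) < ∑ k ∈ Ioc a (a + m), r k := by
          have h1 : ((h : ℝ) + 1) ^ h * (2 * ∑ k ∈ Ioc a (a + (m - h * L2)), r k) <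
              ((h : ℝ) + 1) ^ h * ∑ k ∈ Ioc a (a + m), r k := by
            calc ((h : ℝ) + 1) ^ h * (2 * ∑ k ∈ Ioc a (a + (m - h * L2)), r k)
                = 2 * (((h : ℝ) + 1) ^ h * ∑ k ∈ Ioc a (a + (m - h * L2)), r k) := by ring
            _ < 2 * ((h : ℝ) ^ h * ∑ k ∈ Ioc a (a + m), r k) := by linarith
            _ = (2 * (h : ℝ) ^ h) * ∑ k ∈ Ioc a (a + m), r k := by ring
            _ ≤ ((h : ℝ) + 1) ^ h * ∑ k ∈ Ioc a (a + m), r k :=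
                mul_le_mul_of_nonneg_right hbern hS0
          exact lt_of_mul_lt_mul_left h1 (le_of_lt hpow)
        have hsplit1 : (∑ k ∈ Ioc a (a + h * L1), r k) +
            (∑ k ∈ Ioc (a + h * L1) (a + m), r k) = ∑ k ∈ Ioc a (a + m), r k :=
          Finset.sum_Ioc_consecutive r (by omega) (by omega)
        have hmid : ∑ k ∈ Ioc a (a + h * L1), r k ≤ ∑ k ∈ Ioc a (a + (m - h * L2)), r k :=
          smono r hr le_rfl le_rfl (by omega) (by omega)
        linarith

/-- If `m = 2^(∑_{k<p} h^k + ∑_{k<q} h^k)`, then a sequence of positive reals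
`r 1, …, r m` contains an `h`-increasing sum-subsequence of length `p` or an
`h`-decreasing sum-subsequence of length `q`. -/
theorem stmt0 (m h p q : ℕ) (hh : 0 < h) (hp : 0 < p) (hq : 0 < q)
    (r : ℕ → ℝ) (hr : ∀ k, 1 ≤ k → k ≤ m → 0 < r k)
    (hm : m = 2 ^ (∑ k ∈ Finset.range p, h ^ k + ∑ k ∈ Finset.range q, h ^ k)) :
    (∃ i : ℕ → ℕ, (∀ τ, τ < p → i τ < i (τ + 1)) ∧ i p ≤ m ∧
      ∀ τ, τ + 1 < p →
        (h : ℝ) * ∑ k ∈ Finset.Icc (i τ + 1) (i (τ + 1)), r k ≤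
          ∑ k ∈ Finset.Icc (i (τ + 1) + 1) (i (τ + 2)), r k) ∨
    (∃ i : ℕ → ℕ, (∀ τ, τ < q → i τ < i (τ + 1)) ∧ i q ≤ m ∧
      ∀ τ, τ + 1 < q →
        (h : ℝ) * ∑ k ∈ Finset.Icc (i (τ + 1) + 1) (i (τ + 2)), r k ≤
          ∑ k ∈ Finset.Icc (i τ + 1) (i (τ + 1)), r k) := by
  have hkey := key h hh r (p + q) p q 0 m le_rfl hp hq
    (fun k hk1 hk2 => hr k (by omega) (by omega)) hm
  simp only [Finset.Icc_add_one_left_eq_Ioc]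
  rcases hkey with ⟨i, h1, h2, h3, h4⟩ | ⟨i, h1, h2, h3, h4⟩
  · exact Or.inl ⟨i, h1, by omega, h4⟩
  · exact Or.inr ⟨i, h1, by omega, h4⟩
end

section
/- Let w ∈ R^2 and let (v_1, ..., v_n) be a proper sequence (with indices taken cyclically, v_{n+1} = v_1). If there exist distinct indices p_1, p_2 such that Δ(w, v_{p_i - 1}, v_{p_i}) · Δ(w, v_{p_i}, v_{p_i + 1}) < 0 for i = 1, 2, then for every index q ∉ {p_1, p_2} it holds that Δ(w, v_{q-1}, v_q) · Δ(w, v_q, v_{q+1}) > 0. -/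
open EuclideanGeometry Real Finset

noncomputable section

/-- Points of the plane. -/
abbrev Pt : Type := EuclideanSpace ℝ (Fin 2)

/-- `Δ(a,b,c)`: the oriented area of the parallelepiped spanned by `a - b` and `c - b`. -/
def tdet (a b c : Pt) : ℝ :=
  (a 0 - b 0) * (c 1 - b 1) - (a 1 - b 1) * (c 0 - b 0)

/-- `β(a,b,c) = π - ∠(a,b,c)`, where `∠` is the unsigned angle at `b`. -/
def beta (a b c : Pt) : ℝ := Real.pi - EuclideanGeometry.angle a b c

/-- Cyclic successor on `{1, …, n}`. -/
def cyc (n j : ℕ) : ℕ := if j = n then 1 else j + 1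

/-- Cyclic predecessor on `{1, …, n}`. -/
def cycPred (n j : ℕ) : ℕ := if j = 1 then n else j - 1

/-- `(v 1, …, v n)` is a proper sequence: `Δ(v₁,v₂,v₃) > 0` and every segment
`conv{v_j, v_{j+1}}` (indices cyclic) is an edge of the convex hull of the points,
i.e. it is the set of maximizers of some linear functional over the points. -/
def Proper (n : ℕ) (v : ℕ → Pt) : Prop :=
  0 < tdet (v 1) (v 2) (v 3) ∧
  ∀ j, 1 ≤ j → j ≤ n →
    ∃ (ℓ : Pt →ₗ[ℝ] ℝ) (c : ℝ), ℓ (v j) = c ∧ ℓ (v (cyc n j)) = c ∧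
      ∀ k, 1 ≤ k → k ≤ n → k ≠ j → k ≠ cyc n j → ℓ (v k) < c

/-- `(v 1, …, v n)` is `θ`-thin. -/
def Thin (n : ℕ) (v : ℕ → Pt) (θ : ℝ) : Prop :=
  ∑ k ∈ Finset.Icc 2 (n - 1), beta (v (k - 1)) (v k) (v (k + 1)) ≤ θ

/-- The edge sequence of `(v 1, …, v n)` is `h`-decreasing. -/
def EdgeDecr (n : ℕ) (v : ℕ → Pt) (h : ℝ) : Prop :=
  ∀ k, 1 ≤ k → k + 2 ≤ n → h * dist (v (k + 1)) (v (k + 2)) ≤ dist (v k) (v (k + 1))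

lemma tdet_def (a b c : Pt) :
    tdet a b c = (a 0 - b 0) * (c 1 - b 1) - (a 1 - b 1) * (c 0 - b 0) := rfl

lemma prop_id (p0 p1 r0 r1 x0 x1 y0 y1 al be c : ℝ)
    (hp : p0*al + p1*be = c) (hr : r0*al + r1*be = c) :
    ((x0-p0)*(r1-p1) - (x1-p1)*(r0-p0)) * (y0*al + y1*be - c)
      = ((y0-p0)*(r1-p1) - (y1-p1)*(r0-p0)) * (x0*al + x1*be - c) := by
  linear_combination ((x0-p0)*(y1-p1) - (x1-p1)*(y0-p0)) * hr +
    (-((x0-p0)*(y1-p1) - (x1-p1)*(y0-p0))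
      + ((x0-p0)*(r1-p1) - (x1-p1)*(r0-p0))
      - ((y0-p0)*(r1-p1) - (y1-p1)*(r0-p0))) * hp

lemma ell_coord (ℓ : Pt →ₗ[ℝ] ℝ) (z : Pt) :
    ℓ z = z 0 * ℓ (EuclideanSpace.single 0 1) + z 1 * ℓ (EuclideanSpace.single 1 1) := by
  have hz : z = z 0 • (EuclideanSpace.single (0 : Fin 2) (1:ℝ))
      + z 1 • EuclideanSpace.single (1 : Fin 2) (1:ℝ) := by
    ext i
    fin_cases i <;> simp [EuclideanSpace.single_apply]
  conv_lhs => rw [hz]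
  rw [map_add, map_smul, map_smul]
  simp [smul_eq_mul]

lemma onePos {n : ℕ} {v : ℕ → Pt} (hv : Proper n v) {j : ℕ} (hj1 : 1 ≤ j) (hjn : j ≤ n)
    {k₀ : ℕ} (hk₀1 : 1 ≤ k₀) (hk₀n : k₀ ≤ n) (hk₀j : k₀ ≠ j) (hk₀c : k₀ ≠ cyc n j)
    (hpos : 0 < tdet (v k₀) (v j) (v (cyc n j))) :
    ∀ k, 1 ≤ k → k ≤ n → k ≠ j → k ≠ cyc n j → 0 < tdet (v k) (v j) (v (cyc n j)) := by
  obtain ⟨ℓ, c, hp, hr, hlt⟩ := hv.2 j hj1 hjn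
  intro k hk1 hkn hkj hkc
  set al := ℓ (EuclideanSpace.single 0 1) with hal
  set be := ℓ (EuclideanSpace.single 1 1) with hbe
  have hp' : (v j) 0 * al + (v j) 1 * be = c := by rw [← ell_coord]; exact hp
  have hr' : (v (cyc n j)) 0 * al + (v (cyc n j)) 1 * be = c := by rw [← ell_coord]; exact hr
  have hk' : (v k) 0 * al + (v k) 1 * be - c < 0 := by
    have := hlt k hk1 hkn hkj hkc
    rw [ell_coord ℓ (v k)] at this
    linarith
  have hk₀' : (v k₀) 0 * al + (v k₀) 1 * be - c < 0 := by
    have := hlt k₀ hk₀1 hk₀n hk₀j hk₀c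
    rw [ell_coord ℓ (v k₀)] at this
    linarith
  have iden := prop_id (v j 0) (v j 1) (v (cyc n j) 0) (v (cyc n j) 1)
    (v k₀ 0) (v k₀ 1) (v k 0) (v k 1) al be c hp' hr'
  rw [← tdet_def, ← tdet_def] at iden
  nlinarith [mul_pos hpos (neg_pos.2 hk'), iden, hk₀']

lemma tdet_cycl (a b c : Pt) : tdet a b c = tdet b c a := by unfold tdet; ring
lemma tdet_swap13 (a b c : Pt) : tdet a b c = - tdet c b a := by unfold tdet; ring

lemma cyc_mem {n j : ℕ} (hn : 3 ≤ n) (h1 : 1 ≤ j) (h2 : j ≤ n) :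
    1 ≤ cyc n j ∧ cyc n j ≤ n := by unfold cyc; split_ifs <;> omega
lemma cyc_ne {n j : ℕ} (hn : 3 ≤ n) (h1 : 1 ≤ j) (h2 : j ≤ n) :
    cyc n j ≠ j := by unfold cyc; split_ifs <;> omega
lemma cyc_cyc_ne {n j : ℕ} (hn : 3 ≤ n) (h1 : 1 ≤ j) (h2 : j ≤ n) :
    cyc n (cyc n j) ≠ j := by unfold cyc; split_ifs <;> omega

lemma factAll {n : ℕ} (hn : 3 ≤ n) {v : ℕ → Pt} (hv : Proper n v) :
    ∀ j, 1 ≤ j → j ≤ n → ∀ k, 1 ≤ k → k ≤ n → k ≠ j → k ≠ cyc n j →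
      0 < tdet (v k) (v j) (v (cyc n j)) := by
  have step : ∀ j, 1 ≤ j → j ≤ n →
      (∀ k, 1 ≤ k → k ≤ n → k ≠ j → k ≠ cyc n j → 0 < tdet (v k) (v j) (v (cyc n j))) →
      (∀ k, 1 ≤ k → k ≤ n → k ≠ cyc n j → k ≠ cyc n (cyc n j) →
        0 < tdet (v k) (v (cyc n j)) (v (cyc n (cyc n j)))) := by
    intro j hj1 hjn hPj
    set j1 := cyc n j with hj1def
    set j2 := cyc n j1 with hj2def
    have hj1m := cyc_mem hn hj1 hjn
    have hj2m := cyc_mem hn hj1m.1 hj1m.2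
    have h2ne1 : j2 ≠ j1 := cyc_ne hn hj1m.1 hj1m.2
    have h2nej : j2 ≠ j := cyc_cyc_ne hn hj1 hjn
    have h := hPj j2 hj2m.1 hj2m.2 h2nej h2ne1
    have h' : 0 < tdet (v j) (v j1) (v j2) := by rw [← tdet_cycl]; exact h
    have hjne1 : j ≠ j1 := (cyc_ne hn hj1 hjn).symm
    have hjne2 : j ≠ j2 := h2nej.symm
    exact onePos hv hj1m.1 hj1m.2 hj1 hjn hjne1 hjne2 h'
  have base : ∀ k, 1 ≤ k → k ≤ n → k ≠ 1 → k ≠ cyc n 1 → 0 < tdet (v k) (v 1) (v (cyc n 1)) := by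
    have hc1 : cyc n 1 = 2 := by unfold cyc; split_ifs <;> omega
    rw [hc1]
    have h3 : 0 < tdet (v 3) (v 1) (v 2) := by
      rw [tdet_cycl]; exact hv.1
    have := onePos hv (le_refl 1) (by omega) (k₀ := 3) (by omega) hn (by omega) (by rw [hc1]; omega) (by rw [hc1]; exact h3)
    intro k hk1 hkn hk1' hk2
    exact (by rw [hc1] at this; exact this k hk1 hkn hk1' hk2)
  intro j
  induction j with
  | zero => intro h; omega
  | succ i ih =>
    intro hj1 hjn
    by_cases hi : i = 0
    · subst hi; exact base
    · have hPi := ih (by omega) (by omega)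
      have hc : cyc n i = i + 1 := by unfold cyc; split_ifs <;> omega
      have := step i (by omega) (by omega) hPi
      rw [hc] at this
      exact this

lemma cycPred_mem {n j : ℕ} (hn : 3 ≤ n) (h1 : 1 ≤ j) (h2 : j ≤ n) :
    1 ≤ cycPred n j ∧ cycPred n j ≤ n := by unfold cycPred; split_ifs <;> omega
lemma cyc_cycPred {n j : ℕ} (hn : 3 ≤ n) (h1 : 1 ≤ j) (h2 : j ≤ n) :
    cyc n (cycPred n j) = j := by unfold cyc cycPred; split_ifs <;> omega
lemma cycPred_cyc {n j : ℕ} (hn : 3 ≤ n) (h1 : 1 ≤ j) (h2 : j ≤ n) :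
    cycPred n (cyc n j) = j := by unfold cyc cycPred; split_ifs <;> omega
lemma cycPred_ne {n j : ℕ} (hn : 3 ≤ n) (h1 : 1 ≤ j) (h2 : j ≤ n) :
    cycPred n j ≠ j := by unfold cycPred; split_ifs <;> omega
lemma cycPred_ne_cyc {n j : ℕ} (hn : 3 ≤ n) (h1 : 1 ≤ j) (h2 : j ≤ n) :
    cycPred n j ≠ cyc n j := by unfold cyc cycPred; split_ifs <;> omega

lemma key_id (w a b c x : Pt) : tdet a w x * tdet b a c
    = tdet x a c * tdet a w b + tdet b a x * tdet a w c := by unfold tdet; ring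

/-- support lemma at a strict sign-change vertex -/
lemma supp {n : ℕ} (hn : 3 ≤ n) {v : ℕ → Pt}
    (F : ∀ j, 1 ≤ j → j ≤ n → ∀ k, 1 ≤ k → k ≤ n → k ≠ j → k ≠ cyc n j →
      0 < tdet (v k) (v j) (v (cyc n j)))
    (w : Pt) {p : ℕ} (hp1 : 1 ≤ p) (hpn : p ≤ n)
    (hsame : 0 < tdet (v p) w (v (cycPred n p)) * tdet (v p) w (v (cyc n p))) :
    (∀ k, 1 ≤ k → k ≤ n → k ≠ p → 0 < tdet (v p) w (v k)) ∨
    (∀ k, 1 ≤ k → k ≤ n → k ≠ p → tdet (v p) w (v k) < 0) := by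
  set pm := cycPred n p with hpm
  set pp := cyc n p with hpp
  have hpmm := cycPred_mem hn hp1 hpn
  have hppm := cyc_mem hn hp1 hpn
  have hpm_ne : pm ≠ p := cycPred_ne hn hp1 hpn
  have hpp_ne : pp ≠ p := cyc_ne hn hp1 hpn
  have hpm_pp : pm ≠ pp := cycPred_ne_cyc hn hp1 hpn
  have hT : 0 < tdet (v pm) (v p) (v pp) := F p hp1 hpn pm hpmm.1 hpmm.2 hpm_ne hpm_pp
  have main : ∀ k, 1 ≤ k → k ≤ n → k ≠ p → k ≠ pm → k ≠ pp →
      tdet (v p) w (v k) * tdet (v pm) (v p) (v pp)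
        = tdet (v k) (v p) (v pp) * tdet (v p) w (v pm)
          + tdet (v pm) (v p) (v k) * tdet (v p) w (v pp) := fun k _ _ _ _ _ =>
    key_id w (v p) (v pm) (v pp) (v k)
  have hA : ∀ k, 1 ≤ k → k ≤ n → k ≠ p → k ≠ pp → 0 < tdet (v k) (v p) (v pp) :=
    fun k hk1 hkn hkp hkpp => F p hp1 hpn k hk1 hkn hkp hkpp
  have hB : ∀ k, 1 ≤ k → k ≤ n → k ≠ p → k ≠ pm → 0 < tdet (v pm) (v p) (v k) := by
    intro k hk1 hkn hkp hkpm
    have hcycpm : cyc n pm = p := cyc_cycPred hn hp1 hpn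
    have := F pm hpmm.1 hpmm.2 k hk1 hkn hkpm (by rw [hcycpm]; exact hkp)
    rw [hcycpm] at this
    rw [tdet_cycl] at this
    exact this
  rcases lt_trichotomy (tdet (v p) w (v pm)) 0 with hm | hm | hm
  · have hpneg : tdet (v p) w (v pp) < 0 := by nlinarith
    right
    intro k hk1 hkn hkp
    by_cases hkm : k = pm
    · rw [hkm]; exact hm
    by_cases hkpp : k = pp
    · rw [hkpp]; exact hpneg
    have hid := main k hk1 hkn hkp hkm hkpp
    nlinarith [hA k hk1 hkn hkp hkpp, hB k hk1 hkn hkp hkm, hT]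
  · rw [hm] at hsame; nlinarith
  · have hppos : 0 < tdet (v p) w (v pp) := by nlinarith
    left
    intro k hk1 hkn hkp
    by_cases hkm : k = pm
    · rw [hkm]; exact hm
    by_cases hkpp : k = pp
    · rw [hkpp]; exact hppos
    have hid := main k hk1 hkn hkp hkm hkpp
    nlinarith [hA k hk1 hkn hkp hkpp, hB k hk1 hkn hkp hkm, hT]

lemma tdet_aa (a c : Pt) : tdet a a c = 0 := by unfold tdet; ring
lemma tdet_aba (a b : Pt) : tdet a b a = 0 := by unfold tdet; ring

lemma pt_eq (x y : Pt) (h0 : x 0 = y 0) (h1 : x 1 = y 1) : x = y := by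
  ext i; fin_cases i <;> assumption

lemma dicho {t x y : ℝ} (hx : 0 < t * x) (hy : 0 < t * y) :
    (0 < x ∧ 0 < y) ∨ (x < 0 ∧ y < 0) := by
  rcases lt_trichotomy t 0 with h | h | h
  · right; constructor <;> nlinarith
  · subst h; nlinarith
  · left; constructor <;> nlinarith

lemma iia_id (w e a k : Pt) (l : ℝ) (h0 : e 0 - w 0 = l * (a 0 - w 0))
    (h1 : e 1 - w 1 = l * (a 1 - w 1)) : tdet k e a = (l - 1) * tdet a w k := by
  unfold tdet; linear_combination (k 1 - a 1) * h0 + (a 0 - k 0) * h1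

lemma iib_id (w c a k : Pt) (l : ℝ) (h0 : c 0 - w 0 = l * (a 0 - w 0))
    (h1 : c 1 - w 1 = l * (a 1 - w 1)) : tdet k a c = (1 - l) * tdet a w k := by
  unfold tdet; linear_combination (a 1 - k 1) * h0 + (k 0 - a 0) * h1

/-- w is not a vertex -/
lemma nov {n : ℕ} (hn : 3 ≤ n) {v : ℕ → Pt}
    (F : ∀ j, 1 ≤ j → j ≤ n → ∀ k, 1 ≤ k → k ≤ n → k ≠ j → k ≠ cyc n j →
      0 < tdet (v k) (v j) (v (cyc n j)))
    (w : Pt) {p : ℕ} (hp1 : 1 ≤ p) (hpn : p ≤ n)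
    (h1 : tdet w (v (cycPred n p)) (v p) * tdet w (v p) (v (cyc n p)) < 0) :
    ∀ m, 1 ≤ m → m ≤ n → w ≠ v m := by
  intro m hm1 hmn heq
  rw [heq] at h1
  set pm := cycPred n p with hpm
  set pp := cyc n p with hpp
  by_cases h : m = pm
  · rw [h, tdet_aa] at h1; nlinarith
  by_cases h' : m = p
  · rw [h', tdet_aba] at h1; nlinarith
  by_cases h'' : m = pp
  · rw [h'', tdet_aba] at h1; nlinarith
  · have hpmm := cycPred_mem hn hp1 hpn
    have hF1 := F pm hpmm.1 hpmm.2 m hm1 hmn h (by rw [cyc_cycPred hn hp1 hpn]; exact h')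
    rw [cyc_cycPred hn hp1 hpn] at hF1
    have hF2 := F p hp1 hpn m hm1 hmn h' h''
    nlinarith

lemma colin_ex (x0 x1 y0 y1 : ℝ) (h : x0*y1 - x1*y0 = 0) (hx : ¬(x0 = 0 ∧ x1 = 0)) :
    ∃ l, y0 = l*x0 ∧ y1 = l*x1 := by
  by_cases h0 : x0 = 0
  · have h1 : x1 ≠ 0 := fun h1 => hx ⟨h0, h1⟩
    refine ⟨y1 / x1, ?_, by field_simp⟩
    have hz : x1 * y0 = 0 := by rw [h0] at h; linarith
    have : y0 = 0 := by
      rcases mul_eq_zero.1 hz with h' | h'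
      · exact absurd h' h1
      · exact h'
    rw [this, h0]; ring
  · refine ⟨y0 / x0, by field_simp, ?_⟩
    field_simp
    nlinarith [h]

/-- If the two lines through `w` supporting the polygon touch it at `v_{p₁}` and
`v_{p₂}` (in the sense that `Δ` changes sign there), then at every other vertex
`v_q` the two consecutive oriented areas have the same sign. -/
theorem stmt3 (n : ℕ) (hn : 3 ≤ n) (v : ℕ → Pt) (hv : Proper n v) (w : Pt)
    (p₁ p₂ : ℕ) (hp₁ : 1 ≤ p₁) (hp₁n : p₁ ≤ n) (hp₂ : 1 ≤ p₂) (hp₂n : p₂ ≤ n)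
    (hne : p₁ ≠ p₂)
    (h1 : tdet w (v (cycPred n p₁)) (v p₁) * tdet w (v p₁) (v (cyc n p₁)) < 0)
    (h2 : tdet w (v (cycPred n p₂)) (v p₂) * tdet w (v p₂) (v (cyc n p₂)) < 0)
    (q : ℕ) (hq : 1 ≤ q) (hqn : q ≤ n) (hq1 : q ≠ p₁) (hq2 : q ≠ p₂) :
    0 < tdet w (v (cycPred n q)) (v q) * tdet w (v q) (v (cyc n q)) := by
  have F := factAll hn hv
  have hnov := nov hn F w hp₁ hp₁n h1
  -- rewrite hypotheses in "D" form
  have cv1 : ∀ x y : Pt, tdet w x y = tdet y w x := by intro x y; unfold tdet; ring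
  have cv2 : ∀ x y : Pt, tdet w x y = - tdet x w y := by intro x y; unfold tdet; ring
  have hs1 : 0 < tdet (v p₁) w (v (cycPred n p₁)) * tdet (v p₁) w (v (cyc n p₁)) := by
    rw [cv1 (v (cycPred n p₁)) (v p₁), cv2 (v p₁) (v (cyc n p₁))] at h1
    nlinarith
  have hs2 : 0 < tdet (v p₂) w (v (cycPred n p₂)) * tdet (v p₂) w (v (cyc n p₂)) := by
    rw [cv1 (v (cycPred n p₂)) (v p₂), cv2 (v p₂) (v (cyc n p₂))] at h2
    nlinarith
  by_contra hcon
  push_neg at hcon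
  rw [cv1 (v (cycPred n q)) (v q), cv2 (v q) (v (cyc n q))] at hcon
  -- hcon : tdet (v q) w (v qm) * -tdet (v q) w (v qp) ≤ 0
  have hcon' : 0 ≤ tdet (v q) w (v (cycPred n q)) * tdet (v q) w (v (cyc n q)) := by nlinarith
  have hq3 : (0 < tdet (v q) w (v p₁) ∧ 0 < tdet (v q) w (v p₂)) ∨
      (tdet (v q) w (v p₁) < 0 ∧ tdet (v q) w (v p₂) < 0) := by
    rcases eq_or_lt_of_le hcon' with hc0 | hcpos
    · -- a factor is zero
      rcases mul_eq_zero.1 hc0.symm with hDm | hDp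
      · -- tdet (v q) w (v qm) = 0
        set qm := cycPred n q with hqm
        have hqmm := cycPred_mem hn hq hqn
        have hcq : cyc n qm = q := cyc_cycPred hn hq hqn
        have hp1qm : p₁ ≠ qm := by
          intro hcontra
          rw [hcontra, hcq, cv1 (v qm) (v q), hDm, mul_zero] at h1
          exact absurd h1 (by norm_num)
        have hp2qm : p₂ ≠ qm := by
          intro hcontra
          rw [hcontra, hcq, cv1 (v qm) (v q), hDm, mul_zero] at h2
          exact absurd h2 (by norm_num)
        have hne0 : ¬(v q 0 - w 0 = 0 ∧ v q 1 - w 1 = 0) := by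
          rintro ⟨a0, a1⟩
          exact hnov q hq hqn (pt_eq w (v q) (by linarith) (by linarith))
        have hdet : (v q 0 - w 0) * (v qm 1 - w 1) - (v q 1 - w 1) * (v qm 0 - w 0) = 0 := by
          have := hDm; rw [tdet_def] at this; exact this
        obtain ⟨l, hl0, hl1⟩ := colin_ex _ _ _ _ hdet (by
          rintro ⟨a0, a1⟩; exact hne0 ⟨a0, a1⟩)
        have hKey : ∀ k, 1 ≤ k → k ≤ n → k ≠ qm → k ≠ q →
            0 < (l - 1) * tdet (v q) w (v k) := by
          intro k hk1 hkn hkqm hkq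
          have hF := F qm hqmm.1 hqmm.2 k hk1 hkn hkqm (by rw [hcq]; exact hkq)
          rw [hcq] at hF
          rw [iia_id w (v qm) (v q) (v k) l (by linarith [hl0]) (by linarith [hl1])] at hF
          exact hF
        exact dicho (hKey p₁ hp₁ hp₁n (fun h => hp1qm h) hq1.symm.symm.symm)
          (hKey p₂ hp₂ hp₂n (fun h => hp2qm h) hq2.symm.symm.symm)
      · -- tdet (v q) w (v qp) = 0
        set qp := cyc n q with hqp
        have hqpm := cyc_mem hn hq hqn
        have hcpq : cycPred n qp = q := cycPred_cyc hn hq hqn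
        have hp1qp : p₁ ≠ qp := by
          intro hcontra
          have : tdet w (v q) (v qp) = 0 := by
            rw [cv2 (v q) (v qp), hDp, neg_zero]
          rw [hcontra, hcpq, this, zero_mul] at h1
          exact absurd h1 (by norm_num)
        have hp2qp : p₂ ≠ qp := by
          intro hcontra
          have : tdet w (v q) (v qp) = 0 := by
            rw [cv2 (v q) (v qp), hDp, neg_zero]
          rw [hcontra, hcpq, this, zero_mul] at h2
          exact absurd h2 (by norm_num)
        have hne0 : ¬(v q 0 - w 0 = 0 ∧ v q 1 - w 1 = 0) := by
          rintro ⟨a0, a1⟩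
          exact hnov q hq hqn (pt_eq w (v q) (by linarith) (by linarith))
        have hdet : (v q 0 - w 0) * (v qp 1 - w 1) - (v q 1 - w 1) * (v qp 0 - w 0) = 0 := by
          have := hDp; rw [tdet_def] at this; exact this
        obtain ⟨l, hl0, hl1⟩ := colin_ex _ _ _ _ hdet hne0
        have hKey : ∀ k, 1 ≤ k → k ≤ n → k ≠ q → k ≠ qp →
            0 < (1 - l) * tdet (v q) w (v k) := by
          intro k hk1 hkn hkq hkqp
          have hF := F q hq hqn k hk1 hkn hkq hkqp
          rw [iib_id w (v qp) (v q) (v k) l (by linarith [hl0]) (by linarith [hl1])] at hF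
          exact hF
        exact dicho (hKey p₁ hp₁ hp₁n hq1.symm.symm.symm (fun h => hp1qp h))
          (hKey p₂ hp₂ hp₂n hq2.symm.symm.symm (fun h => hp2qp h))
    · -- strict third sign change: use supp at q
      have S₃ := supp hn F w hq hqn hcpos
      rcases S₃ with h | h
      · exact Or.inl ⟨h p₁ hp₁ hp₁n (fun hh => hq1 hh.symm),
          h p₂ hp₂ hp₂n (fun hh => hq2 hh.symm)⟩
      · exact Or.inr ⟨h p₁ hp₁ hp₁n (fun hh => hq1 hh.symm),
          h p₂ hp₂ hp₂n (fun hh => hq2 hh.symm)⟩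
  -- three-support contradiction
  have S₁ := supp hn F w hp₁ hp₁n hs1
  have S₂ := supp hn F w hp₂ hp₂n hs2
  have A1 : (0 < tdet (v p₁) w (v p₂) ∧ 0 < tdet (v p₁) w (v q)) ∨
      (tdet (v p₁) w (v p₂) < 0 ∧ tdet (v p₁) w (v q) < 0) := by
    rcases S₁ with h | h
    · exact Or.inl ⟨h p₂ hp₂ hp₂n hne.symm, h q hq hqn hq1⟩
    · exact Or.inr ⟨h p₂ hp₂ hp₂n hne.symm, h q hq hqn hq1⟩
  have A2 : (0 < tdet (v p₂) w (v p₁) ∧ 0 < tdet (v p₂) w (v q)) ∨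
      (tdet (v p₂) w (v p₁) < 0 ∧ tdet (v p₂) w (v q) < 0) := by
    rcases S₂ with h | h
    · exact Or.inl ⟨h p₁ hp₁ hp₁n hne, h q hq hqn hq2⟩
    · exact Or.inr ⟨h p₁ hp₁ hp₁n hne, h q hq hqn hq2⟩
  have e1 : tdet (v p₂) w (v p₁) = - tdet (v p₁) w (v p₂) := by unfold tdet; ring
  have e2 : tdet (v q) w (v p₁) = - tdet (v p₁) w (v q) := by unfold tdet; ring
  have e3 : tdet (v q) w (v p₂) = - tdet (v p₂) w (v q) := by unfold tdet; ring
  rcases A1 with ⟨ha, hb⟩ | ⟨ha, hb⟩ <;>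
    rcases A2 with ⟨ha', hc⟩ | ⟨ha', hc⟩ <;>
    rcases hq3 with ⟨hb', hc'⟩ | ⟨hb', hc'⟩ <;>
    rw [e1] at ha' <;> rw [e2] at hb' <;> rw [e3] at hc' <;> linarith
end
end

section
/- Let (v_1, ..., v_n) be a proper sequence in R^2 that is 1-thin, i.e., Σ_{k=2}^{n-1} β(v_{k-1}, v_k, v_{k+1}) ≤ 1, where β(a,b,c) = π − ∠(a,b,c). Then 2·d(v_1, v_n) > d(v_1, v_2) + d(v_2, v_3) + ... + d(v_{n-1}, v_n). -/
open EuclideanGeometry Real Finset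
open RealInnerProductSpace

noncomputable section

/-- Triangle inequality for vector angles in the plane, when the sum is less than `π`. -/
lemma angle_triangle_small {x y z : Pt} (hx : x ≠ 0) (hy : y ≠ 0) (hz : z ≠ 0)
    (h : InnerProductGeometry.angle x y + InnerProductGeometry.angle y z < π) :
    InnerProductGeometry.angle x z ≤
      InnerProductGeometry.angle x y + InnerProductGeometry.angle y z := by
  haveI : Fact (Module.finrank ℝ Pt = 2) := ⟨finrank_euclideanSpace_fin⟩
  set o : Orientation ℝ Pt (Fin 2) := (EuclideanSpace.basisFun (Fin 2) ℝ).toBasis.orientation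
  rw [o.angle_eq_abs_oangle_toReal hx hy, o.angle_eq_abs_oangle_toReal hy hz] at h ⊢
  rw [o.angle_eq_abs_oangle_toReal hx hz, ← o.oangle_add hx hy hz]
  set a := (o.oangle x y).toReal
  set b := (o.oangle y z).toReal
  have hsum : o.oangle x y + o.oangle y z = ((a + b : ℝ) : Real.Angle) := by
    rw [Real.Angle.coe_add, Real.Angle.coe_toReal, Real.Angle.coe_toReal]
  have hab : |a + b| < π := lt_of_le_of_lt (abs_add_le a b) h
  rw [hsum, Real.Angle.toReal_coe_eq_self_iff.2 ⟨(abs_lt.1 hab).1, (abs_lt.1 hab).2.le⟩]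
  exact abs_add_le a b

/-- For a proper `1`-thin sequence, twice the distance between the endpoints
exceeds the total length of the path along the edges. -/
theorem stmt4 (n : ℕ) (hn : 3 ≤ n) (v : ℕ → Pt) (hv : Proper n v)
    (hthin : Thin n v 1) :
    ∑ k ∈ Finset.Icc 1 (n - 1), dist (v k) (v (k + 1)) < 2 * dist (v 1) (v n) := by
  clear hv
  have hπ3 : (3 : ℝ) < π := Real.pi_gt_three
  have hβnn : ∀ a b c : Pt, 0 ≤ beta a b c := fun a b c =>
    sub_nonneg.2 (EuclideanGeometry.angle_le_pi a b c)
  have hβle : ∀ k, 2 ≤ k → k ≤ n - 1 → beta (v (k - 1)) (v k) (v (k + 1)) ≤ 1 := by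
    intro k h2 hk
    exact le_trans (Finset.single_le_sum (f := fun j => beta (v (j - 1)) (v j) (v (j + 1)))
      (fun i _ => hβnn _ _ _) (Finset.mem_Icc.2 ⟨h2, hk⟩)) hthin
  -- all edges are nondegenerate
  have hne : ∀ k, 1 ≤ k → k ≤ n - 1 → v (k + 1) - v k ≠ 0 := by
    intro k h1 hk h0
    have heq : v (k + 1) = v k := by rwa [sub_eq_zero] at h0
    rcases Nat.lt_or_ge k 2 with h2 | h2
    · have hk1 : k = 1 := by omega
      subst hk1
      have h := hβle 2 le_rfl (by omega)
      rw [show (2 : ℕ) - 1 = 1 from rfl, beta, ← heq,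
        EuclideanGeometry.angle_self_left] at h
      linarith
    · have h := hβle k h2 hk
      rw [beta, heq, EuclideanGeometry.angle_self_right] at h
      linarith
  -- β at an interior vertex is the angle between consecutive edge vectors
  have hbeta_eq : ∀ k : ℕ, beta (v k) (v (k + 1)) (v (k + 2)) =
      InnerProductGeometry.angle (v (k + 1) - v k) (v (k + 2) - v (k + 1)) := by
    intro k
    have hdef : EuclideanGeometry.angle (v k) (v (k + 1)) (v (k + 2)) =
        InnerProductGeometry.angle (v k - v (k + 1)) (v (k + 2) - v (k + 1)) := rfl
    rw [beta, hdef, show v k - v (k + 1) = -(v (k + 1) - v k) from (neg_sub _ _).symm,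
      InnerProductGeometry.angle_neg_left]
    ring
  -- partial sums of β are at most 1
  have hSle : ∀ k, k ≤ n - 1 →
      ∑ j ∈ Finset.Icc 2 k, beta (v (j - 1)) (v j) (v (j + 1)) ≤ 1 := by
    intro k hk
    refine le_trans (Finset.sum_le_sum_of_subset_of_nonneg
      (Finset.Icc_subset_Icc_right hk) (fun i _ _ => hβnn _ _ _)) hthin
  -- the angle between the first edge and the k-th edge is at most the β-sum
  have key : ∀ k, 1 ≤ k → k ≤ n - 1 →
      InnerProductGeometry.angle (v 2 - v 1) (v (k + 1) - v k) ≤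
        ∑ j ∈ Finset.Icc 2 k, beta (v (j - 1)) (v j) (v (j + 1)) := by
    intro k
    induction k with
    | zero => omega
    | succ k ih =>
      intro _ hk
      rcases Nat.lt_or_ge k 1 with h0 | h0
      · have hk0 : k = 0 := by omega
        subst hk0
        rw [InnerProductGeometry.angle_self (hne 1 le_rfl (by omega))]
        simp
      · have hk' : k ≤ n - 1 := by omega
        have ih' := ih h0 hk'
        have hb : beta (v k) (v (k + 1)) (v (k + 2)) =
            InnerProductGeometry.angle (v (k + 1) - v k) (v (k + 2) - v (k + 1)) :=
          hbeta_eq k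
        have hsucc : ∑ j ∈ Finset.Icc 2 (k + 1), beta (v (j - 1)) (v j) (v (j + 1)) =
            (∑ j ∈ Finset.Icc 2 k, beta (v (j - 1)) (v j) (v (j + 1))) +
              beta (v k) (v (k + 1)) (v (k + 2)) := by
          rw [Finset.sum_Icc_succ_top (by omega)]
          rfl
        have hS1 := hSle (k + 1) hk
        rw [hsucc] at hS1 ⊢
        have hlt : InnerProductGeometry.angle (v 2 - v 1) (v (k + 1) - v k) +
            InnerProductGeometry.angle (v (k + 1) - v k) (v (k + 2) - v (k + 1)) < π := by
          have hbn : 0 ≤ beta (v k) (v (k + 1)) (v (k + 2)) := hβnn _ _ _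
          rw [← hb]
          nlinarith [ih', hS1, hbn]
        calc InnerProductGeometry.angle (v 2 - v 1) (v (k + 2) - v (k + 1)) ≤
            InnerProductGeometry.angle (v 2 - v 1) (v (k + 1) - v k) +
              InnerProductGeometry.angle (v (k + 1) - v k) (v (k + 2) - v (k + 1)) :=
              angle_triangle_small (hne 1 le_rfl (by omega)) (hne k h0 hk')
                (hne (k + 1) (by omega) hk) hlt
          _ ≤ (∑ j ∈ Finset.Icc 2 k, beta (v (j - 1)) (v j) (v (j + 1))) +
              beta (v k) (v (k + 1)) (v (k + 2)) := by rw [hb]; exact add_le_add_left ih' _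
  -- cos of every such angle exceeds 1/2
  have hcos : (1 / 2 : ℝ) < Real.cos 1 := by
    rw [← Real.cos_pi_div_three]
    exact Real.cos_lt_cos_of_nonneg_of_le_pi (by norm_num) (by linarith) (by linarith)
  set E : Pt := v 2 - v 1 with hE
  have hEpos : 0 < ‖E‖ := norm_pos_iff.2 (hne 1 le_rfl (by omega))
  -- lower bound for each inner product
  have hlow : ∀ k ∈ Finset.Icc 1 (n - 1),
      1 / 2 * (‖E‖ * ‖v (k + 1) - v k‖) < ⟪E, v (k + 1) - v k⟫ := by
    intro k hk
    obtain ⟨h1, h2⟩ := Finset.mem_Icc.1 hk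
    have hekpos : 0 < ‖v (k + 1) - v k‖ := norm_pos_iff.2 (hne k h1 h2)
    have hang1 : InnerProductGeometry.angle E (v (k + 1) - v k) ≤ 1 :=
      le_trans (key k h1 h2) (hSle k h2)
    have hc : Real.cos 1 ≤ Real.cos (InnerProductGeometry.angle E (v (k + 1) - v k)) :=
      Real.cos_le_cos_of_nonneg_of_le_pi (InnerProductGeometry.angle_nonneg _ _)
        (by linarith) hang1
    have hinner := InnerProductGeometry.cos_angle_mul_norm_mul_norm E (v (k + 1) - v k)
    nlinarith [mul_pos hEpos hekpos]
  have hsumlt := Finset.sum_lt_sum_of_nonempty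
    (Finset.nonempty_Icc.2 (by omega : 1 ≤ n - 1)) hlow
  -- telescoping
  have tele : ∀ m : ℕ, 1 ≤ m → ∑ k ∈ Finset.Icc 1 m, (v (k + 1) - v k) = v (m + 1) - v 1 := by
    intro m hm
    induction m with
    | zero => omega
    | succ m ih =>
      rcases Nat.lt_or_ge m 1 with h0 | h0
      · have : m = 0 := by omega
        subst this; simp
      · rw [Finset.sum_Icc_succ_top (by omega), ih h0]
        abel
  have htele := tele (n - 1) (by omega)
  have hn1 : n - 1 + 1 = n := by omega
  rw [hn1] at htele
  have hinner_sum : ∑ k ∈ Finset.Icc 1 (n - 1), ⟪E, v (k + 1) - v k⟫ =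
      ⟪E, v n - v 1⟫ := by
    rw [← inner_sum, htele]
  have hcs : ⟪E, v n - v 1⟫ ≤ ‖E‖ * ‖v n - v 1‖ := real_inner_le_norm _ _
  rw [hinner_sum] at hsumlt
  have hfac : ∑ k ∈ Finset.Icc 1 (n - 1), 1 / 2 * (‖E‖ * ‖v (k + 1) - v k‖) =
      1 / 2 * ‖E‖ * ∑ k ∈ Finset.Icc 1 (n - 1), ‖v (k + 1) - v k‖ := by
    rw [Finset.mul_sum]; congr 1; ext k; ring
  rw [hfac] at hsumlt
  have hdist : ∀ k : ℕ, dist (v k) (v (k + 1)) = ‖v (k + 1) - v k‖ := by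
    intro k; rw [dist_eq_norm, norm_sub_rev]
  have hdist1n : dist (v 1) (v n) = ‖v n - v 1‖ := by rw [dist_eq_norm, norm_sub_rev]
  rw [hdist1n]
  simp_rw [hdist]
  nlinarith [hsumlt, hcs, hEpos]
end
end

section
/- Let (v_1, ..., v_n) be a proper θ-thin sequence in R^2 with θ < 1. Then any subsequence (v_{i_1}, ..., v_{i_m}) (with i_1 < ... < i_m) is also θ-thin. In fact Σ_{k=2}^{n-1} β(v_{k-1}, v_k, v_{k+1}) = α(v_2, v_1, v_n) + α(v_1, v_n, v_{n-1}). -/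
open EuclideanGeometry Real Finset

noncomputable section

namespace Stmt6Aux

instance : Fact (Module.finrank ℝ Pt = 2) := ⟨finrank_euclideanSpace_fin⟩

def ob : OrthonormalBasis (Fin 2) ℝ Pt := EuclideanSpace.basisFun (Fin 2) ℝ

def ori : Orientation ℝ Pt (Fin 2) := -ob.toBasis.orientation

lemma areaForm_eq (x y : Pt) : ori.areaForm x y = x 1 * y 0 - x 0 * y 1 := by
  rw [show ori.areaForm = -(ob.toBasis.orientation).areaForm from
    Orientation.areaForm_neg_orientation _]
  simp only [LinearMap.neg_apply]
  rw [Orientation.areaForm_to_volumeForm, (ob.toBasis.orientation).volumeForm_robust ob rfl,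
    Module.Basis.det_apply, Matrix.det_fin_two]
  simp [Module.Basis.toMatrix, ob]
  ring

lemma sign_one_of_pos {x y : Pt} (h : 0 < ori.areaForm x y) : (ori.oangle x y).sign = 1 := by
  have hz : (ori.kahler x y).im = ori.areaForm x y := by
    simp [Orientation.kahler_apply_apply, Complex.real_smul]
  rw [Orientation.oangle, Real.Angle.sign, Real.Angle.sin_coe, Complex.sin_arg, hz]
  have habs : 0 < ‖ori.kahler x y‖ := by
    have : (ori.kahler x y) ≠ 0 := by
      intro h0
      rw [h0] at hz
      simp at hz
      rw [← hz] at h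
      exact lt_irrefl 0 h
    exact norm_pos_iff.mpr this
  exact sign_pos (div_pos h habs)

lemma left_ne_zero_of_pos {x y : Pt} (h : 0 < ori.areaForm x y) : x ≠ 0 := by
  rintro rfl; simp at h

lemma right_ne_zero_of_pos {x y : Pt} (h : 0 < ori.areaForm x y) : y ≠ 0 := by
  rintro rfl; simp at h

lemma angle_mem_of_pos {x y : Pt} (h : 0 < ori.areaForm x y) :
    ori.oangle x y = (InnerProductGeometry.angle x y : Real.Angle) ∧
      0 < InnerProductGeometry.angle x y ∧ InnerProductGeometry.angle x y < π := by
  have hs := sign_one_of_pos h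
  have h1 : ori.oangle x y = (InnerProductGeometry.angle x y : Real.Angle) :=
    ori.oangle_eq_angle_of_sign_eq_one hs
  have hsin : 0 < Real.sin (InnerProductGeometry.angle x y) := by
    have := hs
    rw [h1, Real.Angle.sign, Real.Angle.sin_coe] at this
    rcases lt_trichotomy 0 (Real.sin (InnerProductGeometry.angle x y)) with hlt | heq | hgt
    · exact hlt
    · rw [← heq] at this; simp at this
    · rw [sign_neg hgt] at this; simp at this
  refine ⟨h1, ?_, ?_⟩
  · rcases (InnerProductGeometry.angle_nonneg x y).lt_or_eq with h0 | h0
    · exact h0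
    · exfalso; rw [← h0] at hsin; simp at hsin
  · rcases (InnerProductGeometry.angle_le_pi x y).lt_or_eq with h0 | h0
    · exact h0
    · exfalso; rw [h0] at hsin; simp at hsin

lemma angle_add_of_pos {x y z : Pt} (hxy : 0 < ori.areaForm x y) (hyz : 0 < ori.areaForm y z)
    (hxz : 0 < ori.areaForm x z) :
    InnerProductGeometry.angle x z =
      InnerProductGeometry.angle x y + InnerProductGeometry.angle y z := by
  obtain ⟨e1, a0, api⟩ := angle_mem_of_pos hxy
  obtain ⟨e2, b0, bpi⟩ := angle_mem_of_pos hyz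
  obtain ⟨e3, c0, cpi⟩ := angle_mem_of_pos hxz
  have hadd := ori.oangle_add (left_ne_zero_of_pos hxy) (right_ne_zero_of_pos hxy)
    (right_ne_zero_of_pos hyz)
  rw [e1, e2, e3, ← Real.Angle.coe_add] at hadd
  obtain ⟨k, hk⟩ := Real.Angle.angle_eq_iff_two_pi_dvd_sub.mp hadd
  have hpi := Real.pi_pos
  have hk0 : k = 0 := by
    rcases lt_trichotomy k 0 with h | h | h
    · exfalso
      have : (k : ℝ) ≤ -1 := by exact_mod_cast (by omega : k ≤ -1)
      nlinarith
    · exact h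
    · exfalso
      have : (1 : ℝ) ≤ (k : ℝ) := by exact_mod_cast h
      nlinarith
  rw [hk0] at hk
  simp at hk
  linarith

lemma abs_toReal_coe_le (r : ℝ) : |((r : Real.Angle)).toReal| ≤ |r| := by
  have hpi := Real.pi_pos
  have ht1 := Real.Angle.neg_pi_lt_toReal (r : Real.Angle)
  have ht2 := Real.Angle.toReal_le_pi (r : Real.Angle)
  obtain ⟨k, hk⟩ := Real.Angle.angle_eq_iff_two_pi_dvd_sub.mp
    (Real.Angle.coe_toReal (r : Real.Angle))
  rcases eq_or_ne k 0 with rfl | hne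
  · simp at hk
    rw [sub_eq_zero] at hk
    rw [hk]
  · have hk1 : (1 : ℝ) ≤ |(k : ℝ)| := by
      have := Int.one_le_abs hne
      exact_mod_cast this
    have habs : 2 * π ≤ |(r : Real.Angle).toReal - r| := by
      rw [hk, abs_mul, abs_of_pos (by positivity : (0:ℝ) < 2*π)]
      nlinarith
    have h5 := abs_sub ((r : Real.Angle).toReal) r
    have h3 : |(r : Real.Angle).toReal| ≤ π := abs_le.mpr ⟨by linarith, ht2⟩
    linarith

lemma abs_toReal_add_le (A B : Real.Angle) :
    |(A + B).toReal| ≤ |A.toReal| + |B.toReal| := by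
  have : A + B = ((A.toReal + B.toReal : ℝ) : Real.Angle) := by
    rw [Real.Angle.coe_add, Real.Angle.coe_toReal, Real.Angle.coe_toReal]
  rw [this]
  exact (abs_toReal_coe_le _).trans (abs_add_le _ _)

lemma angle_tri (x y z : Pt) (hx : x ≠ 0) (hy : y ≠ 0) (hz : z ≠ 0) :
    InnerProductGeometry.angle x z ≤
      InnerProductGeometry.angle x y + InnerProductGeometry.angle y z := by
  rw [ori.angle_eq_abs_oangle_toReal hx hz, ori.angle_eq_abs_oangle_toReal hx hy,
    ori.angle_eq_abs_oangle_toReal hy hz, ← ori.oangle_add hx hy hz]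
  exact abs_toReal_add_le _ _

lemma pt_decomp (x : Pt) :
    x = x 0 • (EuclideanSpace.single (0 : Fin 2) (1:ℝ)) +
        x 1 • (EuclideanSpace.single (1 : Fin 2) (1:ℝ)) := by
  ext i
  fin_cases i <;> simp [EuclideanSpace.single_apply]

lemma lin_apply (ℓ : Pt →ₗ[ℝ] ℝ) (x : Pt) :
    ℓ x = x 0 * ℓ (EuclideanSpace.single (0 : Fin 2) (1:ℝ)) +
          x 1 * ℓ (EuclideanSpace.single (1 : Fin 2) (1:ℝ)) := by
  conv_lhs => rw [pt_decomp x]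
  simp

lemma lin_eq_cross (ℓ : Pt →ₗ[ℝ] ℝ) (d : Pt) (hd : d ≠ 0) (h : ℓ d = 0) :
    ∃ μ : ℝ, ∀ x : Pt, ℓ x = μ * (d 0 * x 1 - d 1 * x 0) := by
  set L0 := ℓ (EuclideanSpace.single (0 : Fin 2) (1:ℝ)) with hL0
  set L1 := ℓ (EuclideanSpace.single (1 : Fin 2) (1:ℝ)) with hL1
  have hld : d 0 * L0 + d 1 * L1 = 0 := by rw [← lin_apply]; exact h
  have hd01 : d 0 ≠ 0 ∨ d 1 ≠ 0 := by
    by_contra hcon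
    push_neg at hcon
    apply hd
    rw [pt_decomp d, hcon.1, hcon.2]
    simp
  rcases hd01 with h0 | h1
  · refine ⟨L1 / d 0, fun x => ?_⟩
    rw [lin_apply ℓ x, ← hL0, ← hL1]
    field_simp
    linear_combination (x 0) * hld
  · refine ⟨-L0 / d 1, fun x => ?_⟩
    rw [lin_apply ℓ x, ← hL0, ← hL1]
    field_simp
    linear_combination (x 1) * hld

lemma tdet_cyc (a b c : Pt) : tdet a b c = tdet b c a := by unfold tdet; ring

lemma areaForm_tdet (p q1 q2 : Pt) : ori.areaForm (q1 - p) (q2 - p) = tdet p q1 q2 := by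
  rw [areaForm_eq]
  simp only [PiLp.sub_apply, tdet]
  ring

lemma eangle_eq (a b c : Pt) :
    EuclideanGeometry.angle a b c = InnerProductGeometry.angle (a - b) (c - b) := rfl

lemma angle_split {p q1 q2 q3 : Pt} (h12 : 0 < tdet p q1 q2) (h23 : 0 < tdet p q2 q3)
    (h13 : 0 < tdet p q1 q3) :
    EuclideanGeometry.angle q1 p q3 =
      EuclideanGeometry.angle q1 p q2 + EuclideanGeometry.angle q2 p q3 := by
  rw [eangle_eq, eangle_eq, eangle_eq]
  exact angle_add_of_pos (by rwa [areaForm_tdet]) (by rwa [areaForm_tdet])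
    (by rwa [areaForm_tdet])

lemma beta_nonneg (a b c : Pt) : 0 ≤ beta a b c := by
  unfold beta
  linarith [EuclideanGeometry.angle_le_pi a b c]

lemma T_add (f : ℕ → ℝ) {a b c : ℕ} (hab : a < b) (hbc : b < c) :
    ∑ k ∈ Finset.Icc (a+1) (c-1), f k =
      (∑ k ∈ Finset.Icc (a+1) (b-1), f k) + f b + ∑ k ∈ Finset.Icc (b+1) (c-1), f k := by
  obtain ⟨b', rfl⟩ : ∃ b', b = b' + 1 := ⟨b - 1, by omega⟩
  obtain ⟨c', rfl⟩ : ∃ c', c = c' + 1 := ⟨c - 1, by omega⟩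
  simp only [Nat.add_sub_cancel]
  rw [Finset.Icc_add_one_left_eq_Ioc, Finset.Icc_add_one_left_eq_Ioc, Finset.Icc_add_one_left_eq_Ioc,
    ← Finset.sum_Ioc_consecutive f (by omega : a ≤ b'+1) (by omega : b'+1 ≤ c'),
    ← Finset.sum_Ioc_succ_top (by omega : a ≤ b')]

section main

variable {n : ℕ} {v : ℕ → Pt} (hn : 3 ≤ n) (hv : Proper n v)

lemma cyc_mem {j : ℕ} (hj1 : 1 ≤ j) (hjn : j ≤ n) : 1 ≤ cyc n j ∧ cyc n j ≤ n := by
  unfold cyc; split <;> omega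

lemma cyc_ne (hn : 3 ≤ n) {j : ℕ} (hj1 : 1 ≤ j) (hjn : j ≤ n) : cyc n j ≠ j := by
  simp only [cyc]; split_ifs <;> omega

lemma cyc_cyc_ne (hn : 3 ≤ n) {j : ℕ} (hj1 : 1 ≤ j) (hjn : j ≤ n) :
    cyc n (cyc n j) ≠ j := by
  simp only [cyc]; split_ifs <;> omega

include hn hv in
lemma vne_succ {j : ℕ} (hj1 : 1 ≤ j) (hjn : j ≤ n) : v j ≠ v (cyc n j) := by
  obtain ⟨h1, h2⟩ := cyc_mem hj1 hjn (j := j)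
  obtain ⟨ℓ, c, e1, e2, hlt⟩ := hv.2 (cyc n j) h1 h2
  have := hlt j hj1 hjn (Ne.symm (cyc_ne hn hj1 hjn)) (Ne.symm (cyc_cyc_ne hn hj1 hjn))
  intro heq
  rw [heq, e1] at this
  exact lt_irrefl _ this

include hn hv in
lemma edge_dichotomy {j : ℕ} (hj1 : 1 ≤ j) (hjn : j ≤ n) :
    (∀ k, 1 ≤ k → k ≤ n → k ≠ j → k ≠ cyc n j → 0 < tdet (v j) (v (cyc n j)) (v k)) ∨
    (∀ k, 1 ≤ k → k ≤ n → k ≠ j → k ≠ cyc n j → tdet (v j) (v (cyc n j)) (v k) < 0) := by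
  obtain ⟨ℓ, c, e1, e2, hlt⟩ := hv.2 j hj1 hjn
  set d : Pt := v (cyc n j) - v j with hd_def
  have hd : d ≠ 0 := sub_ne_zero_of_ne (Ne.symm (vne_succ hn hv hj1 hjn))
  have hld : ℓ d = 0 := by rw [hd_def, map_sub, e1, e2, sub_self]
  obtain ⟨μ, hμ⟩ := lin_eq_cross ℓ d hd hld
  have key : ∀ k, ℓ (v k) - c = μ * (- tdet (v j) (v (cyc n j)) (v k)) := by
    intro k
    have h1 : ℓ (v k - v j) = ℓ (v k) - c := by rw [map_sub, e1]
    have h2 : d 0 * (v k - v j) 1 - d 1 * (v k - v j) 0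
        = - tdet (v j) (v (cyc n j)) (v k) := by
      rw [hd_def]
      simp only [PiLp.sub_apply, tdet]
      ring
    rw [← h1, hμ, h2]
  obtain ⟨k0, hk01, hk0n, hk0j, hk0c⟩ : ∃ k, 1 ≤ k ∧ k ≤ n ∧ k ≠ j ∧ k ≠ cyc n j := by
    by_cases hjn' : j = n
    · exact ⟨2, by omega, by omega, by omega, by unfold cyc; split <;> omega⟩
    · by_cases hj1' : j = 1
      · exact ⟨3, by omega, by omega, by omega, by unfold cyc; split <;> omega⟩
      · exact ⟨1, by omega, by omega, by omega, by unfold cyc; split <;> omega⟩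
  have hk0lt := hlt k0 hk01 hk0n hk0j hk0c
  have hμ0 : μ ≠ 0 := by
    intro h0
    have := key k0
    rw [h0, zero_mul] at this
    linarith
  rcases hμ0.lt_or_gt with hneg | hpos
  · right
    intro k h1 h2 h3 h4
    have hk := key k
    have hlt' := hlt k h1 h2 h3 h4
    nlinarith
  · left
    intro k h1 h2 h3 h4
    have hk := key k
    have hlt' := hlt k h1 h2 h3 h4
    nlinarith

include hn hv in
lemma edges_pos : ∀ j, 1 ≤ j → j ≤ n →
    ∀ k, 1 ≤ k → k ≤ n → k ≠ j → k ≠ cyc n j → 0 < tdet (v j) (v (cyc n j)) (v k) := by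
  intro j hj1
  induction j, hj1 using Nat.le_induction with
  | base =>
    intro hjn
    rcases edge_dichotomy hn hv (le_refl 1) hjn with h | h
    · exact h
    · exfalso
      have hc1 : cyc n 1 = 2 := by unfold cyc; split <;> omega
      have h3 := h 3 (by omega) (by omega) (by omega) (by rw [hc1]; omega)
      rw [hc1] at h3
      exact absurd hv.1 (not_lt.mpr h3.le)
  | succ j hj ih =>
    intro hjn
    have hGj := ih (by omega)
    have hcj : cyc n j = j + 1 := by unfold cyc; split <;> omega
    rcases edge_dichotomy hn hv (by omega : 1 ≤ j + 1) hjn with h | h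
    · exact h
    · exfalso
      have hkvalid : 1 ≤ cyc n (j+1) ∧ cyc n (j+1) ≤ n := cyc_mem (by omega) hjn
      have hne1 : cyc n (j+1) ≠ j := by unfold cyc; split <;> omega
      have hne2 : cyc n (j+1) ≠ cyc n j := by rw [hcj]; exact cyc_ne hn (by omega) hjn
      have tpos := hGj (cyc n (j+1)) hkvalid.1 hkvalid.2 hne1 hne2
      rw [hcj] at tpos
      have tneg := h j (by omega) (by omega) (by omega)
        (by exact Ne.symm (by unfold cyc; split <;> omega))
      rw [tdet_cyc] at tpos
      exact absurd tpos (not_lt.mpr tneg.le)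

include hn hv in
lemma vne {a b : ℕ} (ha : 1 ≤ a) (hab : a < b) (hbn : b ≤ n) : v a ≠ v b := by
  have hcyc : cyc n a = a + 1 := by unfold cyc; split <;> omega
  rcases eq_or_lt_of_le (show a + 1 ≤ b from hab) with heq | hlt
  · have h := vne_succ hn hv ha (by omega : a ≤ n)
    rw [hcyc, heq] at h; exact h
  · obtain ⟨ℓ, c, e1, e2, hlt'⟩ := hv.2 a ha (by omega)
    have := hlt' b (by omega) hbn (by omega) (by rw [hcyc]; omega)
    intro heq; rw [← heq, e1] at this; exact lt_irrefl _ this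

include hn hv in
lemma tT1 {a b : ℕ} (ha : 1 ≤ a) (hab : a + 1 < b) (hbn : b ≤ n) :
    0 < tdet (v a) (v (a+1)) (v b) := by
  have hcyc : cyc n a = a + 1 := by unfold cyc; split <;> omega
  have := edges_pos hn hv a ha (by omega) b (by omega) hbn (by omega) (by rw [hcyc]; omega)
  rwa [hcyc] at this

include hn hv in
lemma tT2 {a b : ℕ} (ha : 1 ≤ a) (hab : a < b) (hb1 : b + 1 ≤ n) :
    0 < tdet (v b) (v (b+1)) (v a) := by
  have hcyc : cyc n b = b + 1 := by unfold cyc; split <;> omega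
  have := edges_pos hn hv b (by omega) (by omega) a ha (by omega) (by omega)
    (by rw [hcyc]; omega)
  rwa [hcyc] at this

include hn hv in
lemma lemM : ∀ a, 1 ≤ a → ∀ b, a < b → b ≤ n →
    EuclideanGeometry.angle (v (a+1)) (v a) (v b) +
      EuclideanGeometry.angle (v a) (v b) (v (b-1)) =
    ∑ k ∈ Finset.Icc (a+1) (b-1), beta (v (k-1)) (v k) (v (k+1)) := by
  intro a ha b hab
  replace hab : a + 1 ≤ b := hab
  induction b, hab using Nat.le_induction with
  | base =>
    intro hbn
    have hne : v a ≠ v (a+1) := vne hn hv ha (by omega) hbn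
    rw [Nat.add_sub_cancel]
    rw [EuclideanGeometry.angle_self_of_ne hne.symm, EuclideanGeometry.angle_self_of_ne hne]
    rw [Finset.Icc_eq_empty (by omega), Finset.sum_empty]
    norm_num
  | succ b hb ih =>
    intro hbn
    obtain ⟨c, rfl⟩ : ∃ c, b = c + 1 := ⟨b - 1, by omega⟩
    simp only [Nat.add_sub_cancel] at ih ⊢
    have IH := ih (by omega)
    have hvac1 : v a ≠ v (c+1) := vne hn hv ha (by omega) (by omega)
    have hvac2 : v a ≠ v (c+2) := vne hn hv ha (by omega) (by omega)
    have hi : EuclideanGeometry.angle (v (a+1)) (v a) (v (c+2)) =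
        EuclideanGeometry.angle (v (a+1)) (v a) (v (c+1)) +
        EuclideanGeometry.angle (v (c+1)) (v a) (v (c+2)) := by
      rcases eq_or_lt_of_le hb with heq | hlt
      · rw [← heq]
        rw [EuclideanGeometry.angle_self_of_ne
          (show v (a+1) ≠ v a from (vne hn hv ha (by omega) (by omega)).symm)]
        ring
      · exact angle_split (tT1 hn hv ha hlt (by omega))
          (by rw [tdet_cyc]; exact tT2 hn hv ha (by omega) (by omega))
          (tT1 hn hv ha (by omega) (by omega))
    have hiii : EuclideanGeometry.angle (v (c+2)) (v (c+1)) (v c) =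
        EuclideanGeometry.angle (v (c+2)) (v (c+1)) (v a) +
        EuclideanGeometry.angle (v a) (v (c+1)) (v c) := by
      rcases eq_or_lt_of_le hb with heq | hlt
      · have hca : c = a := by omega
        rw [hca] at hvac1 ⊢
        rw [EuclideanGeometry.angle_self_of_ne hvac1]
        ring
      · have h12 : 0 < tdet (v (c+1)) (v (c+2)) (v a) := tT2 hn hv ha (by omega) (by omega)
        have h23 : 0 < tdet (v (c+1)) (v a) (v c) := by
          rw [tdet_cyc, tdet_cyc]
          exact tT2 hn hv (by omega) (by omega) (by omega)
        have h13 : 0 < tdet (v (c+1)) (v (c+2)) (v c) := by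
          rw [tdet_cyc, tdet_cyc]
          exact tT1 hn hv (by omega) (by omega) (by omega)
        exact angle_split h12 h23 h13
    have hii := EuclideanGeometry.angle_add_angle_add_angle_eq_pi
      (p₁ := v a) (p₂ := v (c+1)) (p₃ := v (c+2)) hvac1.symm
    have hsum : ∑ k ∈ Finset.Icc (a+1) (c+1), beta (v (k-1)) (v k) (v (k+1)) =
        (∑ k ∈ Finset.Icc (a+1) c, beta (v (k-1)) (v k) (v (k+1))) +
          beta (v c) (v (c+1)) (v (c+2)) := by
      rw [Finset.sum_Icc_succ_top (by omega : a + 1 ≤ c + 1)]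
      simp only [Nat.add_sub_cancel]
    have c1 : EuclideanGeometry.angle (v (c+1)) (v a) (v (c+2)) =
        EuclideanGeometry.angle (v (c+2)) (v a) (v (c+1)) := EuclideanGeometry.angle_comm _ _ _
    have c2 : EuclideanGeometry.angle (v a) (v (c+2)) (v (c+1)) =
        EuclideanGeometry.angle (v (c+1)) (v (c+2)) (v a) := EuclideanGeometry.angle_comm _ _ _
    have c3 : EuclideanGeometry.angle (v c) (v (c+1)) (v (c+2)) =
        EuclideanGeometry.angle (v (c+2)) (v (c+1)) (v c) := EuclideanGeometry.angle_comm _ _ _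
    have c4 : EuclideanGeometry.angle (v (c+2)) (v (c+1)) (v a) =
        EuclideanGeometry.angle (v a) (v (c+1)) (v (c+2)) := EuclideanGeometry.angle_comm _ _ _
    rw [hsum, ← IH]
    unfold beta
    linarith


include hn hv in
lemma lemK {a b c : ℕ} (ha : 1 ≤ a) (hab : a < b) (hbc : b < c) (hcn : c ≤ n) :
    beta (v a) (v b) (v c) ≤ EuclideanGeometry.angle (v a) (v b) (v (b-1)) +
      beta (v (b-1)) (v b) (v (b+1)) + EuclideanGeometry.angle (v (b+1)) (v b) (v c) := by
  obtain ⟨b', rfl⟩ : ∃ b', b = b' + 1 := ⟨b - 1, by omega⟩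
  simp only [Nat.add_sub_cancel]
  have hx : v (b'+1) - v a ≠ 0 :=
    sub_ne_zero_of_ne (vne hn hv ha hab (by omega)).symm
  have hu : v (b'+1) - v b' ≠ 0 :=
    sub_ne_zero_of_ne (vne hn hv (by omega) (by omega) (by omega)).symm
  have hw : v (b'+2) - v (b'+1) ≠ 0 :=
    sub_ne_zero_of_ne (vne hn hv (by omega) (by omega) (by omega)).symm
  have hz : v c - v (b'+1) ≠ 0 :=
    sub_ne_zero_of_ne (vne hn hv (by omega) hbc hcn).symm
  have e0 : beta (v a) (v (b'+1)) (v c) =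
      InnerProductGeometry.angle (v (b'+1) - v a) (v c - v (b'+1)) := by
    unfold beta
    rw [eangle_eq, show v a - v (b'+1) = -(v (b'+1) - v a) from (neg_sub _ _).symm,
      InnerProductGeometry.angle_neg_left]
    ring
  have e1 : InnerProductGeometry.angle (v (b'+1) - v a) (v (b'+1) - v b') =
      EuclideanGeometry.angle (v a) (v (b'+1)) (v b') := by
    rw [eangle_eq, show v a - v (b'+1) = -(v (b'+1) - v a) from (neg_sub _ _).symm,
      show v b' - v (b'+1) = -(v (b'+1) - v b') from (neg_sub _ _).symm,
      InnerProductGeometry.angle_neg_neg]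
  have e2 : InnerProductGeometry.angle (v (b'+1) - v b') (v (b'+2) - v (b'+1)) =
      beta (v b') (v (b'+1)) (v (b'+2)) := by
    unfold beta
    rw [eangle_eq, show v b' - v (b'+1) = -(v (b'+1) - v b') from (neg_sub _ _).symm,
      InnerProductGeometry.angle_neg_left]
    ring
  have e3 : InnerProductGeometry.angle (v (b'+2) - v (b'+1)) (v c - v (b'+1)) =
      EuclideanGeometry.angle (v (b'+2)) (v (b'+1)) (v c) := by
    rw [eangle_eq]
  have t1 := angle_tri (v (b'+1) - v a) (v (b'+1) - v b') (v c - v (b'+1)) hx hu hz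
  have t2 := angle_tri (v (b'+1) - v b') (v (b'+2) - v (b'+1)) (v c - v (b'+1)) hu hw hz
  rw [e0]
  rw [e1] at t1
  rw [e2, e3] at t2
  linarith

include hn hv in
lemma A_le_T {b c : ℕ} (hb : 1 ≤ b) (hbc : b < c) (hcn : c ≤ n) :
    EuclideanGeometry.angle (v (b+1)) (v b) (v c) ≤
      ∑ k ∈ Finset.Icc (b+1) (c-1), beta (v (k-1)) (v k) (v (k+1)) := by
  have h := lemM hn hv b hb c hbc hcn
  have h2 := EuclideanGeometry.angle_nonneg (v b) (v c) (v (c-1))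
  linarith

end main

end Stmt6Aux

open Stmt6Aux in
/-- Any subsequence of a proper `θ`-thin sequence (`θ < 1`) is `θ`-thin; in
fact the sum of the angles `β` equals `α(v₂,v₁,v_n) + α(v₁,v_n,v_{n-1})`. -/
theorem stmt6 (n : ℕ) (hn : 3 ≤ n) (θ : ℝ) (hθ : θ < 1)
    (v : ℕ → Pt) (hv : Proper n v) (hthin : Thin n v θ) :
    (∀ (m : ℕ) (i : ℕ → ℕ), (∀ a b, 1 ≤ a → a < b → b ≤ m → i a < i b) →
      1 ≤ i 1 → i m ≤ n → Thin m (fun k => v (i k)) θ) ∧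
    ∑ k ∈ Finset.Icc 2 (n - 1), beta (v (k - 1)) (v k) (v (k + 1)) =
      EuclideanGeometry.angle (v 2) (v 1) (v n) +
        EuclideanGeometry.angle (v 1) (v n) (v (n - 1)) := by
  have hβ : ∀ k : ℕ, 0 ≤ beta (v (k-1)) (v k) (v (k+1)) := fun k => beta_nonneg _ _ _
  have htot0 : 0 ≤ ∑ k ∈ Finset.Icc 2 (n-1), beta (v (k-1)) (v k) (v (k+1)) :=
    Finset.sum_nonneg fun k _ => hβ k
  have hθ0 : (0:ℝ) ≤ θ := le_trans htot0 hthin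
  constructor
  · intro m i hmono h1 hm
    show (∑ k ∈ Finset.Icc 2 (m-1), beta (v (i (k-1))) (v (i k)) (v (i (k+1)))) ≤ θ
    by_cases hm3 : 3 ≤ m
    swap
    · rw [Finset.Icc_eq_empty (by omega), Finset.sum_empty]; exact hθ0
    have hile : ∀ k, 1 ≤ k → k ≤ m → i k ≤ n := by
      intro k hk1 hk2
      rcases eq_or_lt_of_le hk2 with rfl | hlt
      · exact hm
      · exact le_trans (hmono k m hk1 hlt (le_refl m)).le hm
    have hige : ∀ k, 1 ≤ k → k ≤ m → 1 ≤ i k := by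
      intro k hk1 hk2
      rcases eq_or_lt_of_le hk1 with h | h
      · rw [← h]; exact h1
      · exact le_trans h1 (hmono 1 k (le_refl 1) h hk2).le
    have key : ∀ M, 3 ≤ M → M ≤ m →
        (∑ k ∈ Finset.Icc 2 (M-1), beta (v (i (k-1))) (v (i k)) (v (i (k+1)))) +
          EuclideanGeometry.angle (v (i 1 + 1)) (v (i 1)) (v (i 2)) ≤
        (∑ k ∈ Finset.Icc (i 1 + 1) (i (M-1) - 1), beta (v (k-1)) (v k) (v (k+1))) +
          beta (v (i (M-1) - 1)) (v (i (M-1))) (v (i (M-1) + 1)) +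
          EuclideanGeometry.angle (v (i (M-1) + 1)) (v (i (M-1))) (v (i M)) := by
      intro M hM3
      induction M, hM3 using Nat.le_induction with
      | base =>
        intro hMm
        have hK := lemK hn hv (h1) (hmono 1 2 (by omega) (by omega) (by omega))
          (hmono 2 3 (by omega) (by omega) hMm) (hile 3 (by omega) hMm)
        have hM := lemM hn hv (i 1) h1 (i 2) (hmono 1 2 (by omega) (by omega) (by omega))
          (hile 2 (by omega) (by omega))
        norm_num
        linarith
      | succ M hM ihM =>
        intro hMm
        obtain ⟨M', rfl⟩ : ∃ M', M = M' + 1 := ⟨M - 1, by omega⟩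
        simp only [Nat.add_sub_cancel] at ihM ⊢
        have IH := ihM (by omega)
        have hsum : ∑ k ∈ Finset.Icc 2 (M'+1), beta (v (i (k-1))) (v (i k)) (v (i (k+1))) =
            (∑ k ∈ Finset.Icc 2 M', beta (v (i (k-1))) (v (i k)) (v (i (k+1)))) +
              beta (v (i M')) (v (i (M'+1))) (v (i (M'+2))) := by
          rw [Finset.sum_Icc_succ_top (by omega : 2 ≤ M' + 1)]
          simp only [Nat.add_sub_cancel]
        have hK := lemK hn hv (hige M' (by omega) (by omega))
          (hmono M' (M'+1) (by omega) (by omega) (by omega))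
          (hmono (M'+1) (M'+2) (by omega) (by omega) (by omega))
          (hile (M'+2) (by omega) (by omega))
        have hMeq := lemM hn hv (i M') (hige M' (by omega) (by omega)) (i (M'+1))
          (hmono M' (M'+1) (by omega) (by omega) (by omega))
          (hile (M'+1) (by omega) (by omega))
        have hT := T_add (fun k => beta (v (k-1)) (v k) (v (k+1)))
          (a := i 1) (b := i M') (c := i (M'+1))
          (hmono 1 M' (by omega) (by omega) (by omega))
          (hmono M' (M'+1) (by omega) (by omega) (by omega))
        rw [hsum]
        linarith
    have hfin := key m hm3 (le_refl m)
    have hA0 := EuclideanGeometry.angle_nonneg (v (i 1 + 1)) (v (i 1)) (v (i 2))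
    have hAT := A_le_T hn hv (hige (m-1) (by omega) (by omega))
      (by
        have := hmono (m-1) m (by omega) (by omega) (le_refl m)
        omega)
      hm
    have hT := T_add (fun k => beta (v (k-1)) (v k) (v (k+1)))
      (a := i 1) (b := i (m-1)) (c := i m)
      (hmono 1 (m-1) (by omega) (by omega) (by omega))
      (hmono (m-1) m (by omega) (by omega) (le_refl m))
    have hT2 : ∑ k ∈ Finset.Icc (i 1 + 1) (i m - 1), beta (v (k-1)) (v k) (v (k+1)) =
        (∑ k ∈ Finset.Icc (i 1 + 1) (i (m-1) - 1), beta (v (k-1)) (v k) (v (k+1))) +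
          beta (v (i (m-1) - 1)) (v (i (m-1))) (v (i (m-1) + 1)) +
          ∑ k ∈ Finset.Icc (i (m-1) + 1) (i m - 1), beta (v (k-1)) (v k) (v (k+1)) := hT
    have hsub : ∑ k ∈ Finset.Icc (i 1 + 1) (i m - 1), beta (v (k-1)) (v k) (v (k+1)) ≤
        ∑ k ∈ Finset.Icc 2 (n-1), beta (v (k-1)) (v k) (v (k+1)) := by
      apply Finset.sum_le_sum_of_subset_of_nonneg
      · apply Finset.Icc_subset_Icc
        · omega
        · have := hile m (by omega) (le_refl m); omega
      · intro k _ _; exact hβ k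
    have hAT' : EuclideanGeometry.angle (v (i (m-1) + 1)) (v (i (m-1))) (v (i m)) ≤
        ∑ k ∈ Finset.Icc (i (m-1) + 1) (i m - 1), beta (v (k-1)) (v k) (v (k+1)) := hAT
    have htot : ∑ k ∈ Finset.Icc 2 (n-1), beta (v (k-1)) (v k) (v (k+1)) ≤ θ := hthin
    linarith
  · have h := lemM hn hv 1 (le_refl 1) n (by omega) (le_refl n)
    norm_num at h
    linarith
end
end

section
/- Let v = (v_1, ..., v_m) be a proper sequence in R^2 with slack entries S_i^j = Δ(v_i, v_j, v_{j+1}). If indices p, q, r, t satisfy q > p > r > t, then S_t^p · S_q^r > S_q^p · S_t^r. -/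
open EuclideanGeometry Real Finset

noncomputable section

lemma tdet_rot (a b c : Pt) : tdet a b c = tdet c a b := by unfold tdet; ring

lemma tdet_plucker (a b x y z : Pt) :
    tdet a x z * tdet y a b = tdet a y z * tdet x a b + tdet a x y * tdet z a b := by
  unfold tdet; ring

lemma tdet_pent (A B C D E : Pt) :
    tdet A C D * tdet B C E - tdet A B C * tdet C D E = tdet B C D * tdet A C E := by
  unfold tdet; ring

lemma tdet_hexid (A B C D E F : Pt) :
    (tdet A D E * tdet B C F - tdet A B C * tdet D E F) *
      (tdet A B C * tdet C D E + tdet A C E * tdet B C D) =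
    tdet B C E * (tdet A B C * tdet C D E * tdet A D F +
      tdet A C F * tdet A D E * tdet B C D) := by
  unfold tdet; ring

lemma pent_lt (A B C D E : Pt) (h234 : 0 < tdet B C D) (h135 : 0 < tdet A C E) :
    tdet A B C * tdet C D E < tdet A C D * tdet B C E := by
  nlinarith [tdet_pent A B C D E, mul_pos h234 h135]

lemma hex_lt (A B C D E F : Pt) (h123 : 0 < tdet A B C) (h234 : 0 < tdet B C D)
    (h345 : 0 < tdet C D E) (h135 : 0 < tdet A C E) (h235 : 0 < tdet B C E)
    (h136 : 0 < tdet A C F) (h146 : 0 < tdet A D F) (h145 : 0 < tdet A D E) :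
    tdet A B C * tdet D E F < tdet A D E * tdet B C F := by
  have hM : 0 < tdet A B C * tdet C D E + tdet A C E * tdet B C D :=
    add_pos (mul_pos h123 h345) (mul_pos h135 h234)
  have hR : 0 < tdet B C E * (tdet A B C * tdet C D E * tdet A D F +
      tdet A C F * tdet A D E * tdet B C D) :=
    mul_pos h235 (add_pos (mul_pos (mul_pos h123 h345) h146) (mul_pos (mul_pos h136 h145) h234))
  nlinarith [tdet_hexid A B C D E F, hM, hR]

lemma aux_sign (a b d0 d1 w0 w1 z0 z1 : ℝ) (hd : d0 ≠ 0 ∨ d1 ≠ 0)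
    (h0 : a * d0 + b * d1 = 0) (h1 : a * w0 + b * w1 < 0) (h2 : a * z0 + b * z1 < 0) :
    0 < (w0 * d1 - w1 * d0) * (z0 * d1 - z1 * d0) := by
  have ex0 : (a * w0 + b * w1) * d0 = -(b * (w0 * d1 - w1 * d0)) := by
    linear_combination w0 * h0
  have ex1 : (a * w0 + b * w1) * d1 = a * (w0 * d1 - w1 * d0) := by
    linear_combination w1 * h0
  have ey0 : (a * z0 + b * z1) * d0 = -(b * (z0 * d1 - z1 * d0)) := by
    linear_combination z0 * h0
  have ey1 : (a * z0 + b * z1) * d1 = a * (z0 * d1 - z1 * d0) := by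
    linear_combination z1 * h0
  have key : (a * w0 + b * w1) * (a * z0 + b * z1) * (d0 ^ 2 + d1 ^ 2) =
      (a ^ 2 + b ^ 2) * ((w0 * d1 - w1 * d0) * (z0 * d1 - z1 * d0)) := by
    linear_combination ((a * z0 + b * z1) * d0) * ex0 + ((a * z0 + b * z1) * d1) * ex1
      + (-(b * (w0 * d1 - w1 * d0))) * ey0 + (a * (w0 * d1 - w1 * d0)) * ey1
  have hdpos : 0 < d0 ^ 2 + d1 ^ 2 := by rcases hd with h | h <;> positivity
  have habpos : 0 < a ^ 2 + b ^ 2 := by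
    rcases eq_or_ne a 0 with rfl | ha
    · rcases eq_or_ne b 0 with rfl | hb
      · simp at h1
      · positivity
    · positivity
  have hXY : 0 < (a * w0 + b * w1) * (a * z0 + b * z1) := mul_pos_of_neg_of_neg h1 h2
  nlinarith [mul_pos hXY hdpos]

lemma lin_repr (ℓ : Pt →ₗ[ℝ] ℝ) (x : Pt) :
    ℓ x = x 0 * ℓ (EuclideanSpace.single 0 1) + x 1 * ℓ (EuclideanSpace.single 1 1) := by
  have hx : x = x 0 • (EuclideanSpace.single (0:Fin 2) (1:ℝ)) + x 1 • EuclideanSpace.single 1 1 := by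
    ext i; fin_cases i <;> simp [EuclideanSpace.single_apply]
  calc ℓ x = ℓ (x 0 • (EuclideanSpace.single (0:Fin 2) (1:ℝ)) + x 1 • EuclideanSpace.single 1 1) := by
        rw [← hx]
    _ = x 0 * ℓ (EuclideanSpace.single 0 1) + x 1 * ℓ (EuclideanSpace.single 1 1) := by
        rw [map_add, map_smul, map_smul, smul_eq_mul, smul_eq_mul]

lemma prop_edge_ne (m : ℕ) (hm : 3 ≤ m) (v : ℕ → Pt) (hv : Proper m v)
    (j : ℕ) (hj1 : 1 ≤ j) (hjm : j ≤ m) : v j ≠ v (cyc m j) := by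
  have hc1 : 1 ≤ cyc m j ∧ cyc m j ≤ m := by simp only [cyc]; split_ifs <;> omega
  obtain ⟨ℓ, c, hA, hB, hC⟩ := hv.2 (cyc m j) hc1.1 hc1.2
  have h1 : j ≠ cyc m j := by simp only [cyc]; split_ifs <;> omega
  have h2 : j ≠ cyc m (cyc m j) := by simp only [cyc]; split_ifs <;> omega
  have hlt := hC j hj1 hjm h1 h2
  intro heq; rw [heq, hA] at hlt; exact lt_irrefl c hlt

lemma prop_sameSign (m : ℕ) (hm : 3 ≤ m) (v : ℕ → Pt) (hv : Proper m v)
    (j : ℕ) (hj1 : 1 ≤ j) (hjm : j + 1 ≤ m) (k k' : ℕ)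
    (hk1 : 1 ≤ k) (hkm : k ≤ m) (hkj : k ≠ j) (hkj1 : k ≠ j + 1)
    (hk'1 : 1 ≤ k') (hk'm : k' ≤ m) (hk'j : k' ≠ j) (hk'j1 : k' ≠ j + 1) :
    0 < tdet (v k) (v j) (v (j+1)) * tdet (v k') (v j) (v (j+1)) := by
  have hcyc : cyc m j = j + 1 := by simp only [cyc]; rw [if_neg (by omega)]
  obtain ⟨ℓ, c, hPj, hPj1, hlt⟩ := hv.2 j hj1 (by omega)
  rw [hcyc] at hPj1 hlt
  have hne : v j ≠ v (j+1) := by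
    have h := prop_edge_ne m hm v hv j hj1 (by omega); rwa [hcyc] at h
  set a := ℓ (EuclideanSpace.single 0 1) with ha
  set b := ℓ (EuclideanSpace.single 1 1) with hb
  have repr : ∀ x : Pt, ℓ x = x 0 * a + x 1 * b := fun x => lin_repr ℓ x
  have h0 : a * (v (j+1) 0 - v j 0) + b * (v (j+1) 1 - v j 1) = 0 := by
    have e1 := repr (v j); have e2 := repr (v (j+1))
    linear_combination e1 - e2 + hPj1 - hPj
  have hw : a * (v k 0 - v j 0) + b * (v k 1 - v j 1) < 0 := by
    have e3 := repr (v k); have e1 := repr (v j)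
    have h := hlt k hk1 hkm hkj hkj1
    linarith [e3, e1, hPj, h]
  have hz : a * (v k' 0 - v j 0) + b * (v k' 1 - v j 1) < 0 := by
    have e3 := repr (v k'); have e1 := repr (v j)
    have h := hlt k' hk'1 hk'm hk'j hk'j1
    linarith [e3, e1, hPj, h]
  have hd : (v (j+1) 0 - v j 0 ≠ 0) ∨ (v (j+1) 1 - v j 1 ≠ 0) := by
    by_contra hcon
    push_neg at hcon
    apply hne
    have c0 : v j 0 = v (j+1) 0 := by have := hcon.1; linarith
    have c1 : v j 1 = v (j+1) 1 := by have := hcon.2; linarith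
    ext i
    fin_cases i
    · exact c0
    · exact c1
  have res := aux_sign a b _ _ _ _ _ _ hd h0 hw hz
  show 0 < tdet (v k) (v j) (v (j+1)) * tdet (v k') (v j) (v (j+1))
  unfold tdet
  exact res

lemma prop_consec (m : ℕ) (hm : 3 ≤ m) (v : ℕ → Pt) (hv : Proper m v) :
    ∀ j, 1 ≤ j → j + 2 ≤ m → 0 < tdet (v j) (v (j+1)) (v (j+2)) := by
  intro j hj
  induction j, hj using Nat.le_induction with
  | base => intro _; exact hv.1
  | succ n hn ih =>
    intro h
    have hPn := ih (by omega)
    have prod := prop_sameSign m hm v hv (n+1) (by omega) (by omega)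
      n (n+3) (by omega) (by omega) (by omega) (by omega)
      (by omega) (by omega) (by omega) (by omega)
    have h2 : 0 < tdet (v (n+3)) (v (n+1)) (v (n+1+1)) := by nlinarith [prod, hPn]
    have e : n + 1 + 1 = n + 2 := rfl
    rw [tdet_rot]
    have e2 : n + 1 + 2 = n + 3 := rfl
    rw [e2]
    rw [e] at h2
    exact h2

lemma prop_edgePos (m : ℕ) (hm : 3 ≤ m) (v : ℕ → Pt) (hv : Proper m v) :
    ∀ j k, 1 ≤ j → j + 1 ≤ m → 1 ≤ k → k ≤ m → k ≠ j → k ≠ j + 1 →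
      0 < tdet (v k) (v j) (v (j+1)) := by
  intro j k hj1 hjm hk1 hkm hkj hkj1
  rcases eq_or_ne j 1 with rfl | hj2
  · have anchor : 0 < tdet (v 3) (v 1) (v 2) := by rw [← tdet_rot]; exact hv.1
    rcases eq_or_ne k 3 with rfl | hk3
    · exact anchor
    · have prod := prop_sameSign m hm v hv 1 (by omega) (by omega)
        k 3 hk1 hkm hkj hkj1 (by omega) (by omega) (by omega) (by omega)
    -- note: tdet (v 3) (v 1) (v (1+1)) vs (v 2); 1+1 = 2 by rfl
      nlinarith [prod, anchor]
  · obtain ⟨jj, rfl⟩ : ∃ jj, j = jj + 1 := ⟨j - 1, by omega⟩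
    have anchor : 0 < tdet (v jj) (v (jj+1)) (v (jj+2)) :=
      prop_consec m hm v hv jj (by omega) (by omega)
    rcases eq_or_ne k jj with rfl | hkjj
    · exact anchor
    · have prod := prop_sameSign m hm v hv (jj+1) (by omega) (by omega)
        k jj hk1 hkm hkj hkj1 (by omega) (by omega) (by omega) (by omega)
      nlinarith [prod, anchor]

lemma prop_tripos (m : ℕ) (hm : 3 ≤ m) (v : ℕ → Pt) (hv : Proper m v) :
    ∀ i j k, 1 ≤ i → i < j → j < k → k ≤ m → 0 < tdet (v i) (v j) (v k) := by
  intro i j k hi hij hjk hkm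
  have hjk' : j + 1 ≤ k := hjk
  clear hjk
  induction k, hjk' using Nat.le_induction with
  | base =>
    exact prop_edgePos m hm v hv j i (by omega) (by omega) (by omega) (by omega)
      (by omega) (by omega)
  | succ n hn ih =>
    have hnm : n ≤ m := by omega
    have ihn := ih hnm
    have hA : 0 < tdet (v n) (v i) (v (i+1)) :=
      prop_edgePos m hm v hv i n (by omega) (by omega) (by omega) (by omega)
        (by omega) (by omega)
    have hB : 0 < tdet (v i) (v n) (v (n+1)) :=
      prop_edgePos m hm v hv n i (by omega) (by omega) (by omega) (by omega)
        (by omega) (by omega)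
    have hC : 0 ≤ tdet (v j) (v i) (v (i+1)) := by
      rcases eq_or_lt_of_le (show i + 1 ≤ j by omega) with he | hlt2
      · rw [← he]; rw [tdet_aba]
      · exact le_of_lt (prop_edgePos m hm v hv i j (by omega) (by omega) (by omega)
          (by omega) (by omega) (by omega))
    have hD : 0 < tdet (v (n+1)) (v i) (v (i+1)) :=
      prop_edgePos m hm v hv i (n+1) (by omega) (by omega) (by omega) (by omega)
        (by omega) (by omega)
    have hid := tdet_plucker (v i) (v (i+1)) (v j) (v n) (v (n+1))
    nlinarith [hid, hA, mul_pos ihn hD, mul_nonneg hB.le hC]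


/-- For the slack matrix `S_i^j = Δ(v_i, v_j, v_{j+1})` of a proper sequence,
if `q > p > r > t` then `S_t^p · S_q^r > S_q^p · S_t^r`. -/
theorem stmt7 (m : ℕ) (hm : 3 ≤ m) (v : ℕ → Pt) (hv : Proper m v)
    (p q r t : ℕ) (ht : 1 ≤ t) (htr : t < r) (hrp : r < p) (hpq : p < q)
    (hqm : q ≤ m) :
    tdet (v q) (v p) (v (cyc m p)) * tdet (v t) (v r) (v (cyc m r)) <
      tdet (v t) (v p) (v (cyc m p)) * tdet (v q) (v r) (v (cyc m r)) := by
  have hcp : cyc m p = p + 1 := by simp only [cyc]; rw [if_neg (by omega)]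
  have hcr : cyc m r = r + 1 := by simp only [cyc]; rw [if_neg (by omega)]
  rw [hcp, hcr]
  have trip1 := prop_tripos m hm v hv
  have trip2 : ∀ i j k, 1 ≤ i → i < j → j < k → k ≤ m → 0 < tdet (v j) (v k) (v i) := by
    intro i j k h1 h2 h3 h4; rw [tdet_rot]; exact trip1 i j k h1 h2 h3 h4
  have trip3 : ∀ i j k, 1 ≤ i → i < j → j < k → k ≤ m → 0 < tdet (v k) (v i) (v j) := by
    intro i j k h1 h2 h3 h4; rw [tdet_rot, tdet_rot]; exact trip1 i j k h1 h2 h3 h4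
  have edgeP := prop_edgePos m hm v hv
  have atomic : ∀ iA iF : ℕ,
      0 < tdet (v iA) (v r) (v (r+1)) →
      0 < tdet (v iA) (v (r+1)) (v (p+1)) →
      0 < tdet (v iA) (v (r+1)) (v iF) →
      0 < tdet (v iA) (v p) (v iF) →
      0 < tdet (v iA) (v p) (v (p+1)) →
      tdet (v iF) (v p) (v (p+1)) * tdet (v iA) (v r) (v (r+1)) <
        tdet (v iA) (v p) (v (p+1)) * tdet (v iF) (v r) (v (r+1)) := by
    intro iA iF h123 h135 h136 h146 h145
    rcases eq_or_lt_of_le (show r + 1 ≤ p by omega) with hrp1 | hrp2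
    · -- pentagon (degenerate) case : r + 1 = p
      rw [hrp1] at h123 ⊢
      have h234' : 0 < tdet (v r) (v p) (v (p+1)) :=
        edgeP p r (by omega) (by omega) (by omega) (by omega) (by omega) (by omega)
      have hp5 := pent_lt (v iA) (v r) (v p) (v (p+1)) (v iF) h234' h146
      have e1 : tdet (v p) (v (p+1)) (v iF) = tdet (v iF) (v p) (v (p+1)) := tdet_rot _ _ _
      have e2 : tdet (v r) (v p) (v iF) = tdet (v iF) (v r) (v p) := tdet_rot _ _ _
      rw [e1, e2] at hp5
      linarith [hp5]
    · -- hexagon case : r + 1 < p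
      have h234' : 0 < tdet (v r) (v (r+1)) (v p) :=
        trip1 r (r+1) p (by omega) (by omega) (by omega) (by omega)
      have h345' : 0 < tdet (v (r+1)) (v p) (v (p+1)) :=
        edgeP p (r+1) (by omega) (by omega) (by omega) (by omega) (by omega) (by omega)
      have h235' : 0 < tdet (v r) (v (r+1)) (v (p+1)) :=
        trip1 r (r+1) (p+1) (by omega) (by omega) (by omega) (by omega)
      have hx := hex_lt (v iA) (v r) (v (r+1)) (v p) (v (p+1)) (v iF)
        h123 h234' h345' h135 h235' h136 h146 h145
      have e1 : tdet (v p) (v (p+1)) (v iF) = tdet (v iF) (v p) (v (p+1)) := tdet_rot _ _ _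
      have e2 : tdet (v r) (v (r+1)) (v iF) = tdet (v iF) (v r) (v (r+1)) := tdet_rot _ _ _
      rw [e1, e2] at hx
      linarith [hx]
  rcases eq_or_lt_of_le (show p + 1 ≤ q by omega) with hq1 | hq2
  · -- q = p + 1
    rw [← hq1, tdet_aba, zero_mul]
    exact mul_pos
      (edgeP p t (by omega) (by omega) (by omega) (by omega) (by omega) (by omega))
      (edgeP r (p+1) (by omega) (by omega) (by omega) (by omega) (by omega) (by omega))
  · -- p + 1 < q
    have key : ∀ i i', ((i' = i + 1 ∧ (q ≤ i ∧ i + 1 ≤ m ∨ 1 ≤ i ∧ i + 1 ≤ t)) ∨ (i = m ∧ i' = 1)) →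
        tdet (v i) (v p) (v (p+1)) * tdet (v i') (v r) (v (r+1)) <
          tdet (v i') (v p) (v (p+1)) * tdet (v i) (v r) (v (r+1)) := by
      rintro i i' (⟨rfl, (⟨hqi, him⟩ | ⟨hi1, hit⟩)⟩ | ⟨him2, rfl⟩)
      · exact atomic (i+1) i
          (edgeP r (i+1) (by omega) (by omega) (by omega) (by omega) (by omega) (by omega))
          (trip3 (r+1) (p+1) (i+1) (by omega) (by omega) (by omega) (by omega))
          (trip3 (r+1) i (i+1) (by omega) (by omega) (by omega) (by omega))
          (trip3 p i (i+1) (by omega) (by omega) (by omega) (by omega))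
          (edgeP p (i+1) (by omega) (by omega) (by omega) (by omega) (by omega) (by omega))
      · exact atomic (i+1) i
          (edgeP r (i+1) (by omega) (by omega) (by omega) (by omega) (by omega) (by omega))
          (trip1 (i+1) (r+1) (p+1) (by omega) (by omega) (by omega) (by omega))
          (trip2 i (i+1) (r+1) (by omega) (by omega) (by omega) (by omega))
          (trip2 i (i+1) p (by omega) (by omega) (by omega) (by omega))
          (edgeP p (i+1) (by omega) (by omega) (by omega) (by omega) (by omega) (by omega))
      · rw [him2]
        exact atomic 1 m
          (edgeP r 1 (by omega) (by omega) (by omega) (by omega) (by omega) (by omega))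
          (trip1 1 (r+1) (p+1) (by omega) (by omega) (by omega) (by omega))
          (trip1 1 (r+1) m (by omega) (by omega) (by omega) (by omega))
          (trip1 1 p m (by omega) (by omega) (by omega) (by omega))
          (edgeP p 1 (by omega) (by omega) (by omega) (by omega) (by omega) (by omega))
    set R : ℕ → ℝ := fun i => tdet (v i) (v p) (v (p+1)) / tdet (v i) (v r) (v (r+1)) with hR
    have hSr : ∀ i, 1 ≤ i → i ≤ m → i ≠ r → i ≠ r + 1 → 0 < tdet (v i) (v r) (v (r+1)) :=
      fun i h1 h2 h3 h4 => edgeP r i (by omega) (by omega) h1 h2 h3 h4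
    have hRstep : ∀ i i', 1 ≤ i → i ≤ m → i ≠ r → i ≠ r+1 → 1 ≤ i' → i' ≤ m → i' ≠ r → i' ≠ r+1 →
        ((i' = i + 1 ∧ (q ≤ i ∧ i + 1 ≤ m ∨ 1 ≤ i ∧ i + 1 ≤ t)) ∨ (i = m ∧ i' = 1)) →
        R i < R i' := by
      intro i i' a1 a2 a3 a4 b1 b2 b3 b4 hc
      have h1 := hSr i a1 a2 a3 a4
      have h2 := hSr i' b1 b2 b3 b4
      simp only [hR]
      rw [div_lt_div_iff₀ h1 h2]
      exact key i i' hc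
    have chain1 : ∀ i, q ≤ i → i ≤ m → R q ≤ R i := by
      intro i hi
      induction i, hi using Nat.le_induction with
      | base => intro _; exact le_refl _
      | succ n hn ih =>
        intro hnm
        have h := ih (by omega)
        have hs := hRstep n (n+1) (by omega) (by omega) (by omega) (by omega) (by omega)
          (by omega) (by omega) (by omega) (Or.inl ⟨rfl, Or.inl ⟨hn, hnm⟩⟩)
        linarith
    have hw : R m < R 1 := hRstep m 1 (by omega) (by omega) (by omega) (by omega) (by omega)
      (by omega) (by omega) (by omega) (Or.inr ⟨rfl, rfl⟩)
    have chain2 : ∀ i, 1 ≤ i → i ≤ t → R 1 ≤ R i := by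
      intro i hi
      induction i, hi using Nat.le_induction with
      | base => intro _; exact le_refl _
      | succ n hn ih =>
        intro hnt
        have h := ih (by omega)
        have hs := hRstep n (n+1) (by omega) (by omega) (by omega) (by omega) (by omega)
          (by omega) (by omega) (by omega) (Or.inl ⟨rfl, Or.inr ⟨hn, hnt⟩⟩)
        linarith
    have hfin : R q < R t := by
      have c1 := chain1 m (by omega) (by omega)
      have c2 := chain2 t (by omega) (le_refl t)
      linarith
    have h1 := hSr q (by omega) (by omega) (by omega) (by omega)
    have h2 := hSr t (by omega) (by omega) (by omega) (by omega)
    simp only [hR] at hfin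
    rw [div_lt_div_iff₀ h1 h2] at hfin
    exact hfin
end
end
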